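/- arXiv:1810.04850 — 9 statements merged into one kernel-verified Lean document; each statement's English description precedes it below -/
import Mathlib

section
/- Let a, b, c ∈ ℂ and let U ⊆ ℂ be an open set such that every z ∈ U satisfies z ≠ 0 and z ≠ 1. Suppose f₁, f₂ : ℂ → ℂ are differentiable on U and satisfy, for all z ∈ U, the first-order system f₁'(z) = ((c-a-b)/(z-1))·f₁(z) + ((b-c)/(z-1))·f₂(z) and f₂'(z) = ((c-a)/z)·f₁(z) - (c/z)·f₂(z). Then f₁' is differentiable on U and for every z ∈ U, z(1-z)·f₁''(z) + (c-(a+b+1)z)·f₁'(z) - a·b·f₁(z) = 0. -/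
/-- The Haraoka first-order system implies Gauss' hypergeometric equation. -/
theorem stmt3 (a b c : ℂ) (U : Set ℂ) (hU : IsOpen U)
    (hU0 : ∀ z ∈ U, z ≠ 0) (hU1 : ∀ z ∈ U, z ≠ 1)
    (f₁ f₂ : ℂ → ℂ)
    (hf₁ : DifferentiableOn ℂ f₁ U) (hf₂ : DifferentiableOn ℂ f₂ U)
    (hsys₁ : ∀ z ∈ U, deriv f₁ z = ((c - a - b)/(z - 1)) * f₁ z + ((b - c)/(z - 1)) * f₂ z)
    (hsys₂ : ∀ z ∈ U, deriv f₂ z = ((c - a)/z) * f₁ z - (c/z) * f₂ z) :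
    DifferentiableOn ℂ (deriv f₁) U ∧
    ∀ z ∈ U, z * (1 - z) * deriv (deriv f₁) z + (c - (a + b + 1) * z) * deriv f₁ z
      - a * b * f₁ z = 0 := by
  set g : ℂ → ℂ := fun z => ((c - a - b)/(z - 1)) * f₁ z + ((b - c)/(z - 1)) * f₂ z with hg
  have key : ∀ z ∈ U, HasDerivAt g
      (-(1/(z-1)^2) * (c-a-b) * f₁ z + ((c-a-b)/(z-1)) * deriv f₁ z
        + (-(1/(z-1)^2) * (b-c) * f₂ z + ((b-c)/(z-1)) * deriv f₂ z)) z := by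
    intro z hz
    have hz1 : z - 1 ≠ 0 := sub_ne_zero.mpr (hU1 z hz)
    have h1 : HasDerivAt f₁ (deriv f₁ z) z :=
      (hf₁.differentiableAt (hU.mem_nhds hz)).hasDerivAt
    have h2 : HasDerivAt f₂ (deriv f₂ z) z :=
      (hf₂.differentiableAt (hU.mem_nhds hz)).hasDerivAt
    have hid : HasDerivAt (fun w : ℂ => w - 1) 1 z := (hasDerivAt_id z).sub_const 1
    have hinv : HasDerivAt (fun w : ℂ => (w-1)⁻¹) (-(1/(z-1)^2)) z := by
      exact (hid.inv hz1).congr_deriv (by ring)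
    have hA : HasDerivAt (fun w : ℂ => (w-1)⁻¹ * (c-a-b)) (-(1/(z-1)^2) * (c-a-b)) z :=
      hinv.mul_const _
    have hB : HasDerivAt (fun w : ℂ => (w-1)⁻¹ * (b-c)) (-(1/(z-1)^2) * (b-c)) z :=
      hinv.mul_const _
    have hT := (hA.mul h1).add (hB.mul h2)
    have hgeq : g = fun w : ℂ => (w-1)⁻¹ * (c-a-b) * f₁ w + (w-1)⁻¹ * (b-c) * f₂ w := by
      funext w
      simp only [hg, div_eq_mul_inv]
      ring
    rw [hgeq]
    exact hT.congr_deriv (by ring)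
  have hder : ∀ z ∈ U, deriv f₁ =ᶠ[nhds z] g := by
    intro z hz
    filter_upwards [hU.mem_nhds hz] with w hw using hsys₁ w hw
  constructor
  · intro z hz
    exact ((key z hz).differentiableAt.congr_of_eventuallyEq
      (hder z hz)).differentiableWithinAt
  · intro z hz
    have hz0 : z ≠ 0 := hU0 z hz
    have hz1 : z - 1 ≠ 0 := sub_ne_zero.mpr (hU1 z hz)
    have h2 : deriv (deriv f₁) z = deriv g z := (hder z hz).deriv_eq
    rw [h2, (key z hz).deriv]
    set F1 := f₁ z
    set F2 := f₂ z
    set D1 := deriv f₁ z with hD1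
    set D2 := deriv f₂ z with hD2
    have e1 : D1 = ((c - a - b)/(z - 1)) * F1 + ((b - c)/(z - 1)) * F2 := hsys₁ z hz
    have e2 : D2 = ((c - a)/z) * F1 - (c/z) * F2 := hsys₂ z hz
    have E1 : D1 * (z - 1) = (c - a - b) * F1 + (b - c) * F2 := by
      rw [e1]; field_simp
    have E2 : D2 * z = (c - a) * F1 - c * F2 := by
      rw [e2]; field_simp
    have hd : z * (z - 1) ^ 2 ≠ 0 := mul_ne_zero hz0 (pow_ne_zero _ hz1)
    apply mul_right_cancel₀ hd
    rw [zero_mul]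
    have EG : (-(1/(z-1)^2) * (c-a-b) * F1 + ((c-a-b)/(z-1)) * D1
        + (-(1/(z-1)^2) * (b-c) * F2 + ((b-c)/(z-1)) * D2)) * (z * (z - 1) ^ 2)
        = -(z * (c - a - b) * F1) - z * (b - c) * F2
          + (c - a - b) * z * (z - 1) * D1 + (b - c) * z * (z - 1) * D2 := by
      field_simp; ring
    linear_combination z * (1 - z) * EG + z * (z - 1) * (c - (c + 1) * z) * E1
      - (b - c) * z * (z - 1) ^ 2 * E2
end

section
/- Let a, b, c ∈ ℂ and let U ⊆ ℂ be an open set such that every z ∈ U satisfies z ≠ 0 and z ≠ 1. Suppose f₁, f₂ : ℂ → ℂ are differentiable on U and satisfy, for all z ∈ U, the first-order system f₁'(z) = (b/(z-1))·f₂(z) and f₂'(z) = (-a/z)·f₁(z) + (-c/z + (c-a-b)/(z-1))·f₂(z). Then f₁' is differentiable on U and for every z ∈ U, z(1-z)·f₁''(z) + (c-(a+b+1)z)·f₁'(z) - a·b·f₁(z) = 0. -/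
/-- The (φ₀₁, φ_{{1,1/z}}) first-order system implies Gauss' hypergeometric equation. -/
theorem stmt4 (a b c : ℂ) (U : Set ℂ) (hU : IsOpen U)
    (hU0 : ∀ z ∈ U, z ≠ 0) (hU1 : ∀ z ∈ U, z ≠ 1)
    (f₁ f₂ : ℂ → ℂ)
    (hf₁ : DifferentiableOn ℂ f₁ U) (hf₂ : DifferentiableOn ℂ f₂ U)
    (hsys₁ : ∀ z ∈ U, deriv f₁ z = (b/(z - 1)) * f₂ z)
    (hsys₂ : ∀ z ∈ U, deriv f₂ z = (-a/z) * f₁ z + (-c/z + (c - a - b)/(z - 1)) * f₂ z) :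
    DifferentiableOn ℂ (deriv f₁) U ∧
    ∀ z ∈ U, z * (1 - z) * deriv (deriv f₁) z + (c - (a + b + 1) * z) * deriv f₁ z
      - a * b * f₁ z = 0 := by
  set g : ℂ → ℂ := fun z => (b / (z - 1)) * f₂ z with hg
  have hgdiff : ∀ z ∈ U, HasDerivAt g
      (-b / (z - 1) ^ 2 * f₂ z + b / (z - 1) * deriv f₂ z) z := by
    intro z hz
    have hz1 : z - 1 ≠ 0 := sub_ne_zero.2 (hU1 z hz)
    have hf2 : HasDerivAt f₂ (deriv f₂ z) z :=
      (hf₂.differentiableAt (hU.mem_nhds hz)).hasDerivAt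
    have h1 : HasDerivAt (fun z : ℂ => b / (z - 1))
        ((0 * (z - 1) - b * 1) / (z - 1) ^ 2) z :=
      (hasDerivAt_const z b).div ((hasDerivAt_id z).sub_const 1) hz1
    have h2 := h1.mul hf2
    refine h2.congr_deriv ?_
    ring
  have heq : ∀ z ∈ U, deriv f₁ =ᶠ[nhds z] g := by
    intro z hz
    filter_upwards [hU.mem_nhds hz] with w hw using hsys₁ w hw
  have hderiv2 : ∀ z ∈ U, deriv (deriv f₁) z =
      -b / (z - 1) ^ 2 * f₂ z + b / (z - 1) * deriv f₂ z := by
    intro z hz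
    rw [Filter.EventuallyEq.deriv_eq (heq z hz)]
    exact (hgdiff z hz).deriv
  constructor
  · intro z hz
    exact (((hgdiff z hz).differentiableAt.congr_of_eventuallyEq
      (heq z hz)).differentiableWithinAt)
  · intro z hz
    have hz0 : z ≠ 0 := hU0 z hz
    have hz1 : z - 1 ≠ 0 := sub_ne_zero.2 (hU1 z hz)
    have hv : z * z⁻¹ = 1 := mul_inv_cancel₀ hz0
    have hw : (z - 1) * (z - 1)⁻¹ = 1 := mul_inv_cancel₀ hz1
    rw [hderiv2 z hz, hsys₂ z hz, hsys₁ z hz]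
    have hsq : -b / (z - 1) ^ 2 = -b * (z - 1)⁻¹ * (z - 1)⁻¹ := by
      rw [pow_two, div_eq_mul_inv, mul_inv]; ring
    rw [hsq]
    linear_combination (z * b * (z-1)⁻¹ * f₂ z + a * b * f₁ z * z * z⁻¹
        + b * c * f₂ z * z * z⁻¹
        - b * (c - a - b) * z * (z-1)⁻¹ * f₂ z - b * c * f₂ z) * hw
      + (a * b * f₁ z + b * c * f₂ z) * hv
end

section
/- Let a, b, c ∈ ℂ and let U ⊆ ℂ be an open set such that every z ∈ U satisfies z ≠ 0 and z ≠ 1. Suppose f₁, f₂ : ℂ → ℂ are differentiable on U and satisfy, for all z ∈ U, the first-order system f₁'(z) = (-a/(z-1))·f₁(z) + ((c-b)/(z-1))·f₂(z) and f₂'(z) = (a/z - a/(z-1))·f₁(z) + (-c/z + (c-b)/(z-1))·f₂(z). Then f₁' is differentiable on U and for every z ∈ U, z(1-z)·f₁''(z) + (c-(a+b+1)z)·f₁'(z) - a·b·f₁(z) = 0. -/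
set_option maxHeartbeats 1000000 in
/-- The (φ₀₁, φ_{{1,∞}}) first-order system implies Gauss' hypergeometric equation. -/
theorem stmt5 (a b c : ℂ) (U : Set ℂ) (hU : IsOpen U)
    (hU0 : ∀ z ∈ U, z ≠ 0) (hU1 : ∀ z ∈ U, z ≠ 1)
    (f₁ f₂ : ℂ → ℂ)
    (hf₁ : DifferentiableOn ℂ f₁ U) (hf₂ : DifferentiableOn ℂ f₂ U)
    (hsys₁ : ∀ z ∈ U, deriv f₁ z = (-a/(z - 1)) * f₁ z + ((c - b)/(z - 1)) * f₂ z)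
    (hsys₂ : ∀ z ∈ U, deriv f₂ z = (a/z - a/(z - 1)) * f₁ z + (-c/z + (c - b)/(z - 1)) * f₂ z) :
    DifferentiableOn ℂ (deriv f₁) U ∧
    ∀ z ∈ U, z * (1 - z) * deriv (deriv f₁) z + (c - (a + b + 1) * z) * deriv f₁ z
      - a * b * f₁ z = 0 := by
  have key : ∀ z ∈ U, HasDerivAt (deriv f₁)
      (-a * (-((z - 1) ^ 2)⁻¹) * f₁ z + -a * (z - 1)⁻¹ * deriv f₁ z
        + ((c - b) * (-((z - 1) ^ 2)⁻¹) * f₂ z + (c - b) * (z - 1)⁻¹ * deriv f₂ z)) z := by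
    intro z hz
    have hz1 : z - 1 ≠ 0 := sub_ne_zero.mpr (hU1 z hz)
    have hd1 : HasDerivAt f₁ (deriv f₁ z) z :=
      (hf₁.differentiableAt (hU.mem_nhds hz)).hasDerivAt
    have hd2 : HasDerivAt f₂ (deriv f₂ z) z :=
      (hf₂.differentiableAt (hU.mem_nhds hz)).hasDerivAt
    have hinv : HasDerivAt (fun w : ℂ => (w - 1)⁻¹) (-((z - 1) ^ 2)⁻¹) z := by
      have h : HasDerivAt (fun w : ℂ => w - 1) 1 z := (hasDerivAt_id z).sub_const 1
      simpa [neg_div, one_div, Pi.inv_def] using h.inv hz1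
    have hA : HasDerivAt (fun w => -a * (w - 1)⁻¹ * f₁ w)
        (-a * (-((z - 1) ^ 2)⁻¹) * f₁ z + -a * (z - 1)⁻¹ * deriv f₁ z) z :=
      (hinv.const_mul (-a)).mul hd1
    have hB : HasDerivAt (fun w => (c - b) * (w - 1)⁻¹ * f₂ w)
        ((c - b) * (-((z - 1) ^ 2)⁻¹) * f₂ z + (c - b) * (z - 1)⁻¹ * deriv f₂ z) z :=
      (hinv.const_mul (c - b)).mul hd2
    have hg : HasDerivAt (fun w => -a * (w - 1)⁻¹ * f₁ w + (c - b) * (w - 1)⁻¹ * f₂ w)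
        (-a * (-((z - 1) ^ 2)⁻¹) * f₁ z + -a * (z - 1)⁻¹ * deriv f₁ z
          + ((c - b) * (-((z - 1) ^ 2)⁻¹) * f₂ z + (c - b) * (z - 1)⁻¹ * deriv f₂ z)) z :=
      hA.add hB
    refine hg.congr_of_eventuallyEq ?_
    filter_upwards [hU.mem_nhds hz] with w hw
    rw [hsys₁ w hw]
    ring
  constructor
  · intro z hz
    exact ((key z hz).differentiableAt).differentiableWithinAt
  · intro z hz
    have hz0 : z ≠ 0 := hU0 z hz
    have hz1 : z - 1 ≠ 0 := sub_ne_zero.mpr (hU1 z hz)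
    have h1 : deriv f₁ z * (z - 1) = -a * f₁ z + (c - b) * f₂ z := by
      rw [hsys₁ z hz]; field_simp
    have h2 : deriv f₂ z * (z * (z - 1)) = a * f₁ z * (z - 1) - a * f₁ z * z
        + (-c * (z - 1) + (c - b) * z) * f₂ z := by
      rw [hsys₂ z hz]; field_simp
    have h3 : deriv (deriv f₁) z * (z * (z - 1) ^ 2) = a * f₁ z * z
        - a * z * (z - 1) * deriv f₁ z
        - (c - b) * z * f₂ z + (c - b) * z * (z - 1) * deriv f₂ z := by
      rw [(key z hz).deriv]; field_simp; ring
    have hD : z * (z - 1) ^ 2 ≠ 0 := mul_ne_zero hz0 (pow_ne_zero 2 hz1)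
    have main : (z * (1 - z) * deriv (deriv f₁) z + (c - (a + b + 1) * z) * deriv f₁ z
        - a * b * f₁ z) * (z * (z - 1) ^ 2) = 0 * (z * (z - 1) ^ 2) := by
      rw [zero_mul]
      linear_combination (z * (1 - z)) * h3 + (z * (z - 1) * (c - (b + 1) * z)) * h1
        + (-(c - b) * z * (z - 1)) * h2
    exact mul_right_cancel₀ hD main
end

section
/- Let a, b, c ∈ ℂ with c ≠ 0, and let U ⊆ ℂ be an open set such that every z ∈ U satisfies z ≠ 0 and z ≠ 1. Suppose f₁, f₂ : ℂ → ℂ are differentiable on U and satisfy, for all z ∈ U, the first-order system f₁'(z) = (-ab/(c(z-1)))·f₁(z) - (b(b-c)/(c(z-1)))·f₂(z) and f₂'(z) = (a(a-c)/(c(z-1)))·f₁(z) + (-c/z + (b-c)(a-c)/(c(z-1)))·f₂(z). Then f₁' is differentiable on U and for every z ∈ U, z(1-z)·f₁''(z) + (c-(a+b+1)z)·f₁'(z) - a·b·f₁(z) = 0. -/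
lemma stmt6_coefx (a b c z : ℂ) (hc : c ≠ 0) (hz1 : z - 1 ≠ 0) :
    z * (1 - z) * ((0 * (c * (z - 1)) - -(a * b) * c) / (c * (z - 1)) ^ 2
      + (-(a * b)/(c * (z - 1))) * (-(a * b)/(c * (z - 1)))
      - (b * (b - c)/(c * (z - 1))) * (a * (a - c)/(c * (z - 1))))
    + (c - (a + b + 1) * z) * (-(a * b)/(c * (z - 1))) - a * b = 0 := by
  have h : c * (z - 1) ≠ 0 := mul_ne_zero hc hz1
  field_simp
  ring

lemma stmt6_coefy (a b c z : ℂ) (hc : c ≠ 0) (hz0 : z ≠ 0) (hz1 : z - 1 ≠ 0) :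
    z * (1 - z) * ((-(a * b)/(c * (z - 1))) * (-(b * (b - c)/(c * (z - 1))))
      - ((0 * (c * (z - 1)) - b * (b - c) * c) / (c * (z - 1)) ^ 2
        + (b * (b - c)/(c * (z - 1))) * (-c/z + (b - c) * (a - c)/(c * (z - 1)))))
    + (c - (a + b + 1) * z) * (-(b * (b - c)/(c * (z - 1)))) = 0 := by
  have h : c * (z - 1) ≠ 0 := mul_ne_zero hc hz1
  field_simp
  ring

/-- The (φ₀₁, φ_{{1/z,∞}}) first-order system implies Gauss' hypergeometric equation. -/
theorem stmt6 (a b c : ℂ) (hc : c ≠ 0) (U : Set ℂ) (hU : IsOpen U)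
    (hU0 : ∀ z ∈ U, z ≠ 0) (hU1 : ∀ z ∈ U, z ≠ 1)
    (f₁ f₂ : ℂ → ℂ)
    (hf₁ : DifferentiableOn ℂ f₁ U) (hf₂ : DifferentiableOn ℂ f₂ U)
    (hsys₁ : ∀ z ∈ U, deriv f₁ z = (-(a * b)/(c * (z - 1))) * f₁ z - (b * (b - c)/(c * (z - 1))) * f₂ z)
    (hsys₂ : ∀ z ∈ U, deriv f₂ z = (a * (a - c)/(c * (z - 1))) * f₁ z + (-c/z + (b - c) * (a - c)/(c * (z - 1))) * f₂ z) :
    DifferentiableOn ℂ (deriv f₁) U ∧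
    ∀ z ∈ U, z * (1 - z) * deriv (deriv f₁) z + (c - (a + b + 1) * z) * deriv f₁ z
      - a * b * f₁ z = 0 := by
  set g : ℂ → ℂ := fun z => (-(a * b)/(c * (z - 1))) * f₁ z - (b * (b - c)/(c * (z - 1))) * f₂ z
    with hg
  -- derivative of g at points of U
  have hgd : ∀ z ∈ U, HasDerivAt g
      ((0 * (c * (z-1)) - (-(a*b)) * c) / (c * (z-1))^2 * f₁ z
        + (-(a * b)/(c * (z - 1))) * deriv f₁ z
        - ((0 * (c * (z-1)) - (b*(b-c)) * c) / (c * (z-1))^2 * f₂ z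
          + (b * (b - c)/(c * (z - 1))) * deriv f₂ z)) z := by
    intro z hz
    have hz1 : c * (z - 1) ≠ 0 :=
      mul_ne_zero hc (sub_ne_zero.mpr (hU1 z hz))
    have hden : HasDerivAt (fun z : ℂ => c * (z - 1)) c z := by
      simpa using ((hasDerivAt_id z).sub_const 1).const_mul c
    have h1 := (hf₁.differentiableAt (hU.mem_nhds hz)).hasDerivAt
    have h2 := (hf₂.differentiableAt (hU.mem_nhds hz)).hasDerivAt
    exact ((((hasDerivAt_const z (-(a*b))).div hden hz1).mul h1).sub
      (((hasDerivAt_const z (b*(b-c))).div hden hz1).mul h2))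
  have hEq : ∀ z ∈ U, deriv f₁ z = g z := hsys₁
  constructor
  · intro z hz
    exact (DifferentiableAt.congr_of_eventuallyEq (hgd z hz).differentiableAt
      (Filter.eventuallyEq_of_mem (hU.mem_nhds hz) hEq)).differentiableWithinAt
  · intro z hz
    have hz0 : z ≠ 0 := hU0 z hz
    have hz1 : z - 1 ≠ 0 := sub_ne_zero.mpr (hU1 z hz)
    have hdd : deriv (deriv f₁) z = deriv g z :=
      Filter.EventuallyEq.deriv_eq (Filter.eventuallyEq_of_mem (hU.mem_nhds hz) hEq)
    rw [hdd, (hgd z hz).deriv, hsys₁ z hz, hsys₂ z hz]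
    linear_combination (stmt6_coefx a b c z hc hz1) * f₁ z + (stmt6_coefy a b c z hc hz0 hz1) * f₂ z
end

section
/- Let a, b, c ∈ ℂ and let U ⊆ ℂ be an open set such that every z ∈ U satisfies z ≠ 0 and z ≠ 1. Suppose f₁, f₂ : ℂ → ℂ are differentiable on U and satisfy, for all z ∈ U, the first-order system f₁'(z) = (-b/(z-1))·f₁(z) + (b/(z-1))·f₂(z) and f₂'(z) = ((c-a)/z - (c-a)/(z-1))·f₁(z) + (-c/z + (c-a)/(z-1))·f₂(z). Then f₁' is differentiable on U and for every z ∈ U, z(1-z)·f₁''(z) + (c-(a+b+1)z)·f₁'(z) - a·b·f₁(z) = 0. -/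
/-- The (φ₀₁, φ_{{0,1/z}}) first-order system implies Gauss' hypergeometric equation. -/
theorem stmt7 (a b c : ℂ) (U : Set ℂ) (hU : IsOpen U)
    (hU0 : ∀ z ∈ U, z ≠ 0) (hU1 : ∀ z ∈ U, z ≠ 1)
    (f₁ f₂ : ℂ → ℂ)
    (hf₁ : DifferentiableOn ℂ f₁ U) (hf₂ : DifferentiableOn ℂ f₂ U)
    (hsys₁ : ∀ z ∈ U, deriv f₁ z = (-b/(z - 1)) * f₁ z + (b/(z - 1)) * f₂ z)
    (hsys₂ : ∀ z ∈ U, deriv f₂ z = ((c - a)/z - (c - a)/(z - 1)) * f₁ z + (-c/z + (c - a)/(z - 1)) * f₂ z) :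
    DifferentiableOn ℂ (deriv f₁) U ∧
    ∀ z ∈ U, z * (1 - z) * deriv (deriv f₁) z + (c - (a + b + 1) * z) * deriv f₁ z
      - a * b * f₁ z = 0 := by
  set g : ℂ → ℂ := fun z => (-b/(z - 1)) * f₁ z + (b/(z - 1)) * f₂ z with hg
  have hd1 : ∀ z ∈ U, DifferentiableAt ℂ f₁ z := fun z hz =>
    (hf₁ z hz).differentiableAt (hU.mem_nhds hz)
  have hd2 : ∀ z ∈ U, DifferentiableAt ℂ f₂ z := fun z hz =>
    (hf₂ z hz).differentiableAt (hU.mem_nhds hz)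
  -- derivative of g
  have hgd : ∀ z ∈ U, HasDerivAt g
      ((b/(z - 1)^2) * f₁ z + (-b/(z - 1)) * deriv f₁ z
        + (-b/(z - 1)^2) * f₂ z + (b/(z - 1)) * deriv f₂ z) z := by
    intro z hz
    have hz1 : z - 1 ≠ 0 := sub_ne_zero.mpr (hU1 z hz)
    have hinv : HasDerivAt (fun w : ℂ => (w - 1)⁻¹) (-1 / (z - 1) ^ 2) z := by
      have := ((hasDerivAt_id z).sub_const 1).inv hz1
      simpa [Pi.inv_def] using this
    have h1 : HasDerivAt (fun w : ℂ => -b / (w - 1)) (b / (z - 1) ^ 2) z := by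
      have h := hinv.const_mul (-b)
      have e1 : (fun w : ℂ => -b * (w - 1)⁻¹) = fun w : ℂ => -b / (w - 1) := by
        funext w; ring
      rw [e1] at h
      refine h.congr_deriv ?_
      ring
    have h2 : HasDerivAt (fun w : ℂ => b / (w - 1)) (-b / (z - 1) ^ 2) z := by
      have h := hinv.const_mul b
      have e1 : (fun w : ℂ => b * (w - 1)⁻¹) = fun w : ℂ => b / (w - 1) := by
        funext w; ring
      rw [e1] at h
      refine h.congr_deriv ?_
      ring
    have hA := h1.mul ((hd1 z hz).hasDerivAt)
    have hB := h2.mul ((hd2 z hz).hasDerivAt)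
    have hAB := hA.add hB
    refine hAB.congr_deriv ?_
    ring
  have hgdiff : ∀ z ∈ U, DifferentiableAt ℂ g z := fun z hz => (hgd z hz).differentiableAt
  have hEv : ∀ z ∈ U, deriv f₁ =ᶠ[nhds z] g := by
    intro z hz
    filter_upwards [hU.mem_nhds hz] with w hw
    exact hsys₁ w hw
  constructor
  · intro z hz
    exact ((hgdiff z hz).congr_of_eventuallyEq (hEv z hz)).differentiableWithinAt
  · intro z hz
    have hz0 : z ≠ 0 := hU0 z hz
    have hz1 : z - 1 ≠ 0 := sub_ne_zero.mpr (hU1 z hz)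
    have hdd : deriv (deriv f₁) z = deriv g z := (hEv z hz).deriv_eq
    rw [hdd, (hgd z hz).deriv, hsys₁ z hz, hsys₂ z hz]
    set x := f₁ z
    set y := f₂ z
    have hpow : ((z-1)^2)⁻¹ = (z-1)⁻¹ * (z-1)⁻¹ := by rw [sq, mul_inv]
    simp only [div_eq_mul_inv, hpow]
    generalize hu' : (z-1)⁻¹ = u
    generalize hv' : z⁻¹ = v
    have hu : (z-1)*u = 1 := by rw [← hu']; exact mul_inv_cancel₀ hz1
    have hv : z*v = 1 := by rw [← hv']; exact mul_inv_cancel₀ hz0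
    linear_combination (b*u*y - b*u*x + b*(z-1)*u*y - b*(z-1)*u*x - b*c*y + b*c*x + b*c*v*y
      - b*c*v*x - b*c*u*y + b*c*u*x + b*c*(z-1)*v*y - b*c*(z-1)*v*x - b*c*(z-1)*u*y
      + b*c*(z-1)*u*x + b*b*u*y - b*b*u*x + b*b*(z-1)*u*y - b*b*(z-1)*u*x + a*b*v*x
      + a*b*u*y - a*b*u*x + a*b*(z-1)*v*x + a*b*(z-1)*u*y - a*b*(z-1)*u*x) * hu
      + (b*c*y - b*c*x + a*b*x) * hv
end

section
/- Let a, b, c ∈ ℂ with 0 < Re(a), 0 < Re(c-a), and suppose c is not a nonpositive integer. Let z ∈ ℂ with |z| < 1. Then ∫_{t=0}^{1} t^{a-1}·(1-t)^{c-a-1}·(1-z·t)^{-b} dt = (Γ(a)·Γ(c-a)/Γ(c)) · ∑_{n=0}^{∞} ((a)_n (b)_n / ((c)_n · n!)) · zⁿ, where all powers of complex numbers are principal-branch complex powers (for t ∈ (0,1) the bases t, 1-t are positive reals and 1-zt has positive real part), Γ is the complex Gamma function, and (x)_n = ∏_{m=0}^{n-1}(x+m) is the Pochhammer symbol. -/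
open Complex Filter Set MeasureTheory intervalIntegral
open scoped Topology


noncomputable def pc (b : ℂ) (n : ℕ) : ℂ := (∏ m ∈ Finset.range n, (b + m)) / (Nat.factorial n)

lemma pc_succ (b : ℂ) (n : ℕ) : pc b (n+1) = pc b n * ((b + n) / (n+1)) := by
  have h1 : ((Nat.factorial n : ℂ)) ≠ 0 := Nat.cast_ne_zero.2 n.factorial_ne_zero
  have h2 : ((n : ℂ) + 1) ≠ 0 := Nat.cast_add_one_ne_zero n
  rw [pc, pc, Finset.prod_range_succ, Nat.factorial_succ]
  push_cast
  rw [div_mul_div_comm, mul_comm ((n:ℂ)+1) _]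

lemma summable_pc_norm (b : ℂ) {w : ℂ} (hw : ‖w‖ < 1) :
    Summable (fun n : ℕ => ‖pc b n * w ^ n‖) := by
  set l : ℝ := (1 + ‖w‖) / 2 with hl
  have hw0 : 0 ≤ ‖w‖ := norm_nonneg w
  have hl1 : l < 1 := by rw [hl]; linarith
  have hwl : ‖w‖ < l := by rw [hl]; linarith
  -- the ratio tends to ‖w‖
  have htend : Tendsto (fun n : ℕ => (‖b‖ + n) / (n + 1) * ‖w‖) atTop (𝓝 ‖w‖) := by
    have h0 : Tendsto (fun n : ℕ => (‖b‖ - 1) / (n + 1)) atTop (𝓝 0) := by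
      have := tendsto_const_div_atTop_nhds_zero_nat (‖b‖ - 1)
      have h2 := this.comp (tendsto_add_atTop_nat 1)
      simpa [Function.comp_def] using h2
    have heq : (fun n : ℕ => (‖b‖ + n) / (n + 1) * ‖w‖)
        = fun n : ℕ => (1 + (‖b‖ - 1) / (n + 1)) * ‖w‖ := by
      funext n
      have hn : ((n : ℝ) + 1) ≠ 0 := by positivity
      field_simp
      ring
    rw [heq]
    have := ((tendsto_const_nhds (x := (1:ℝ))).add h0).mul_const ‖w‖
    simpa using this
  have hev : ∀ᶠ n : ℕ in atTop, (‖b‖ + n) / (n + 1) * ‖w‖ < l :=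
    htend.eventually_lt_const hwl
  apply summable_of_ratio_norm_eventually_le hl1
  filter_upwards [hev] with n hn
  have hnorm : ‖pc b (n+1) * w ^ (n+1)‖ = ‖pc b n * w ^ n‖ * (‖b + n‖ / (n + 1) * ‖w‖) := by
    rw [pc_succ, pow_succ]
    rw [show pc b n * ((b + ↑n) / (↑n + 1)) * (w ^ n * w)
      = pc b n * w ^ n * ((b + ↑n) / (↑n + 1) * w) from by ring]
    rw [norm_mul, norm_mul, norm_mul, norm_div,
      show ‖((n:ℂ) + 1)‖ = (n:ℝ) + 1 from by
        rw [show ((n:ℂ)+1) = ((n+1 : ℕ) : ℂ) by push_cast; ring]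
        rw [Complex.norm_natCast]
        push_cast
        ring]
  rw [norm_norm, norm_norm, hnorm]
  have hb : ‖b + (n:ℂ)‖ / (n + 1) * ‖w‖ ≤ (‖b‖ + n) / (n + 1) * ‖w‖ := by
    have h1 : ‖b + (n:ℂ)‖ ≤ ‖b‖ + n := by
      calc ‖b + (n:ℂ)‖ ≤ ‖b‖ + ‖(n:ℂ)‖ := norm_add_le _ _
      _ = ‖b‖ + n := by norm_num
    have hn1 : (0:ℝ) < n + 1 := by positivity
    gcongr
  have := le_trans hb hn.le
  calc ‖pc b n * w ^ n‖ * (‖b + ↑n‖ / (↑n + 1) * ‖w‖)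
      ≤ ‖pc b n * w ^ n‖ * l := by
        apply mul_le_mul_of_nonneg_left this (norm_nonneg _)
    _ = l * ‖pc b n * w ^ n‖ := by ring



lemma slit {u : ℂ} (hu : ‖u‖ < 1) : (1 - u) ∈ slitPlane := by
  rw [mem_slitPlane_iff]
  left
  have h := Complex.abs_re_le_norm u
  simp only [sub_re, one_re]
  have : u.re < 1 := lt_of_le_of_lt (le_trans (le_abs_self _) h) hu
  linarith

lemma iter_deriv (b : ℂ) : ∀ n : ℕ, ∀ w ∈ Metric.ball (0:ℂ) 1,
    iteratedDeriv n (fun u : ℂ => (1 - u) ^ (-b)) w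
      = (∏ m ∈ Finset.range n, (b + m)) * (1 - w) ^ (-b - n) := by
  intro n
  induction n with
  | zero => intro w hw; simp
  | succ n ih =>
    intro w hw
    rw [iteratedDeriv_succ]
    have heq : iteratedDeriv n (fun u : ℂ => (1 - u) ^ (-b))
        =ᶠ[𝓝 w] fun u => (∏ m ∈ Finset.range n, (b + m)) * (1 - u) ^ (-b - n) := by
      filter_upwards [Metric.isOpen_ball.mem_nhds hw] with u hu using ih u hu
    rw [heq.deriv_eq]
    have hw1 : ‖w‖ < 1 := by simpa using hw
    have h1 : HasDerivAt (fun u : ℂ => 1 - u) (-1) w := by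
      simpa using (hasDerivAt_id w).const_sub 1
    have hd : HasDerivAt (fun u : ℂ => (1 - u) ^ (-b - n))
        ((-b - n) * (1 - w) ^ (-b - n - 1) * (-1)) w := h1.cpow_const (slit hw1)
    rw [((hd.const_mul (∏ m ∈ Finset.range n, (b + m)))).deriv]
    rw [Finset.prod_range_succ,
      show (-b - (n:ℂ) - 1) = -b - ((n:ℕ)+1 : ℕ) from by push_cast; ring]
    push_cast
    ring

lemma hasSum_binomial (b : ℂ) {w : ℂ} (hw : ‖w‖ < 1) :
    HasSum (fun n : ℕ => pc b n * w ^ n) ((1 - w) ^ (-b)) := by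
  set f : ℂ → ℂ := fun u => (1 - u) ^ (-b) with hf
  obtain ⟨r, hwr, hr1⟩ : ∃ r : ℝ, ‖w‖ < r ∧ r < 1 := ⟨(1 + ‖w‖)/2, by constructor <;> linarith⟩
  have hr0 : 0 < r := lt_of_le_of_lt (norm_nonneg w) hwr
  set R : NNReal := ⟨r, hr0.le⟩ with hR
  have hdiff : DifferentiableOn ℂ f (Metric.closedBall 0 R) := by
    intro u hu
    have hu1 : ‖u‖ < 1 := by
      have : ‖u‖ ≤ r := by
        have h := Metric.mem_closedBall.1 hu
        rw [dist_zero_right] at h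
        exact h
      linarith
    exact (((differentiableAt_const (1:ℂ)).sub differentiableAt_id).cpow
      (differentiableAt_const _) (slit hu1)).differentiableWithinAt
  have hball := hdiff.hasFPowerSeriesOnBall (by exact_mod_cast hr0)
  have hmem : w ∈ Metric.eball (0:ℂ) R := by
    rw [Metric.mem_eball, edist_zero_right]
    exact_mod_cast (by exact_mod_cast hwr : ‖w‖₊ < R)
  have hsum := hball.hasSum_iteratedFDeriv hmem
  rw [zero_add] at hsum
  convert hsum using 2 with n
  · rfl
  rw [iteratedFDeriv_apply_eq_iteratedDeriv_mul_prod,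
    iter_deriv b n 0 (by simp), pc]
  simp only [smul_eq_mul, Finset.prod_const, Finset.card_univ, Fintype.card_fin]
  rw [show (1:ℂ) - 0 = 1 by ring, one_cpow]
  field_simp

lemma Gamma_shift {s : ℂ} (hs : ∀ m : ℕ, s + m ≠ 0) (n : ℕ) :
    Complex.Gamma (s + n) = Complex.Gamma s * ∏ m ∈ Finset.range n, (s + m) := by
  induction n with
  | zero => simp
  | succ n ih =>
    rw [show (s + ((n:ℕ)+1 : ℕ) : ℂ) = (s + n) + 1 from by push_cast; ring,
      Complex.Gamma_add_one _ (hs n), ih, Finset.prod_range_succ]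
    ring

lemma beta_eq {u v : ℂ} (hu : 0 < u.re) (hv : 0 < v.re) (huv : Complex.Gamma (u + v) ≠ 0) :
    Complex.betaIntegral u v = Complex.Gamma u * Complex.Gamma v / Complex.Gamma (u + v) := by
  have h := Complex.Gamma_mul_Gamma_eq_betaIntegral hu hv
  field_simp
  rw [h]
  ring

/-- Euler's integral representation of Gauss' hypergeometric function:
`∫₀¹ t^{a-1}(1-t)^{c-a-1}(1-zt)^{-b} dt = (Γ(a)Γ(c-a)/Γ(c)) ∑ₙ (a)ₙ(b)ₙ/((c)ₙ n!) zⁿ`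
for `0 < Re a`, `0 < Re (c-a)`, `c` not a nonpositive integer, `|z| < 1`. -/
theorem stmt13 (a b c : ℂ) (ha : 0 < a.re) (hca : 0 < (c - a).re)
    (hc : ∀ m : ℕ, c ≠ -(m : ℂ)) (z : ℂ) (hz : ‖z‖ < 1) :
    (∫ t in (0 : ℝ)..1, (t : ℂ) ^ (a - 1) * ((1 : ℂ) - (t : ℂ)) ^ (c - a - 1)
        * (1 - z * (t : ℂ)) ^ (-b))
      = Complex.Gamma a * Complex.Gamma (c - a) / Complex.Gamma c
        * ∑' n : ℕ, ((∏ m ∈ Finset.range n, (a + m)) * (∏ m ∈ Finset.range n, (b + m))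
            / ((∏ m ∈ Finset.range n, (c + m)) * (Nat.factorial n))) * z ^ n := by
  have hz' : ‖z‖ < 1 := hz
  set Φ : ℕ → ℝ → ℂ := fun n t =>
    pc b n * z ^ n * ((t : ℂ) ^ (a + n - 1) * ((1 : ℂ) - (t : ℂ)) ^ (c - a - 1)) with hΦ
  -- positivity of real parts
  have hre : ∀ n : ℕ, 0 < (a + (n:ℂ)).re := by
    intro n
    rw [Complex.add_re, Complex.natCast_re]
    positivity
  -- pointwise has-sum on Ioc 0 1
  have hpt : ∀ t ∈ Ioc (0:ℝ) 1,
      HasSum (fun n => Φ n t)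
        ((t : ℂ) ^ (a - 1) * ((1 : ℂ) - (t : ℂ)) ^ (c - a - 1) * (1 - z * (t : ℂ)) ^ (-b)) := by
    intro t ht
    obtain ⟨ht0, ht1⟩ := ht
    have hzt : ‖z * (t:ℂ)‖ < 1 := by
      rw [norm_mul, Complex.norm_real, Real.norm_of_nonneg ht0.le]
      calc ‖z‖ * t ≤ ‖z‖ * 1 := by gcongr
        _ < 1 := by simpa using hz'
    have h1 := (hasSum_binomial b hzt).mul_right
      ((t : ℂ) ^ (a - 1) * ((1 : ℂ) - (t : ℂ)) ^ (c - a - 1))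
    have hteq : ∀ n : ℕ, pc b n * (z * t) ^ n
          * ((t : ℂ) ^ (a - 1) * ((1 : ℂ) - (t : ℂ)) ^ (c - a - 1)) = Φ n t := by
      intro n
      have ht0' : (t:ℂ) ≠ 0 := by exact_mod_cast ht0.ne'
      rw [hΦ]
      simp only []
      rw [show a + (n:ℂ) - 1 = (a - 1) + (n:ℕ) from by push_cast; ring,
        Complex.cpow_add _ _ ht0', Complex.cpow_natCast, mul_pow]
      ring
    rw [show ((t : ℂ) ^ (a - 1) * ((1 : ℂ) - (t : ℂ)) ^ (c - a - 1) * (1 - z * (t : ℂ)) ^ (-b))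
      = (1 - z * (t:ℂ)) ^ (-b) * ((t : ℂ) ^ (a - 1) * ((1 : ℂ) - (t : ℂ)) ^ (c - a - 1)) from by
        ring]
    rw [show (fun n => Φ n t) = fun n : ℕ => pc b n * (z * t) ^ n
      * ((t : ℂ) ^ (a - 1) * ((1 : ℂ) - (t : ℂ)) ^ (c - a - 1)) from (funext fun n => (hteq n).symm)]
    exact h1
  -- integrability of each term
  have hInt : ∀ n : ℕ, IntegrableOn (Φ n) (Ioc (0:ℝ) 1) volume := by
    intro n
    have hbc := Complex.betaIntegral_convergent (hre n) hca
    rw [intervalIntegrable_iff_integrableOn_Ioc_of_le zero_le_one] at hbc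
    exact hbc.const_mul _
  -- integrability of the dominating function
  have hCint : IntegrableOn
      (fun t : ℝ => ‖(t : ℂ) ^ (a - 1) * ((1 : ℂ) - (t : ℂ)) ^ (c - a - 1)‖)
      (Ioc (0:ℝ) 1) volume := by
    have hbc := Complex.betaIntegral_convergent ha hca
    rw [intervalIntegrable_iff_integrableOn_Ioc_of_le zero_le_one] at hbc
    exact hbc.norm
  set C : ℝ := ∫ t in Ioc (0:ℝ) 1, ‖(t : ℂ) ^ (a - 1) * ((1 : ℂ) - (t : ℂ)) ^ (c - a - 1)‖ with hC
  -- bound on the norms of the integrals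
  have hle : ∀ n : ℕ, (∫ t in Ioc (0:ℝ) 1, ‖Φ n t‖) ≤ ‖pc b n * z ^ n‖ * C := by
    intro n
    have hmono : ∀ t ∈ Ioc (0:ℝ) 1, ‖Φ n t‖
        ≤ ‖pc b n * z ^ n‖ * ‖(t : ℂ) ^ (a - 1) * ((1 : ℂ) - (t : ℂ)) ^ (c - a - 1)‖ := by
      intro t ht
      obtain ⟨ht0, ht1⟩ := ht
      have ht0' : (t:ℂ) ≠ 0 := by exact_mod_cast ht0.ne'
      have e1 : ‖Φ n t‖ = ‖pc b n * z ^ n‖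
          * (‖(t:ℂ) ^ (a-1)‖ * t ^ n * ‖((1:ℂ) - (t:ℂ)) ^ (c-a-1)‖) := by
        rw [hΦ]
        simp only []
        rw [show a + (n:ℂ) - 1 = (a - 1) + (n:ℕ) from by push_cast; ring,
          Complex.cpow_add _ _ ht0', Complex.cpow_natCast]
        rw [show pc b n * z ^ n * ((t:ℂ)^(a-1) * (t:ℂ)^n * ((1:ℂ)-(t:ℂ))^(c-a-1))
          = (pc b n * z ^ n) * (((t:ℂ)^(a-1)) * (((t:ℂ))^n * ((1:ℂ)-(t:ℂ))^(c-a-1)))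
          from by ring]
        simp only [norm_mul, norm_pow, Complex.norm_real]
        rw [Real.norm_of_nonneg ht0.le]
        ring
      rw [e1, norm_mul ((t:ℂ) ^ (a-1))]
      have htn : t ^ n ≤ 1 := pow_le_one₀ ht0.le ht1
      calc ‖pc b n * z ^ n‖ * (‖(t:ℂ) ^ (a-1)‖ * t ^ n * ‖((1:ℂ) - (t:ℂ)) ^ (c-a-1)‖)
          ≤ ‖pc b n * z ^ n‖ * (‖(t:ℂ) ^ (a-1)‖ * 1 * ‖((1:ℂ) - (t:ℂ)) ^ (c-a-1)‖) := by
            gcongr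
        _ = ‖pc b n * z ^ n‖ * (‖(t:ℂ) ^ (a-1)‖ * ‖((1:ℂ) - (t:ℂ)) ^ (c-a-1)‖) := by
            ring
    have := setIntegral_mono_on ((hInt n).norm)
      (hCint.const_mul (‖pc b n * z ^ n‖)) measurableSet_Ioc hmono
    calc (∫ t in Ioc (0:ℝ) 1, ‖Φ n t‖)
        ≤ ∫ t in Ioc (0:ℝ) 1,
            ‖pc b n * z ^ n‖ * ‖(t : ℂ) ^ (a - 1) * ((1 : ℂ) - (t : ℂ)) ^ (c - a - 1)‖ := this
      _ = ‖pc b n * z ^ n‖ * C := by rw [hC, MeasureTheory.integral_const_mul]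
  have hsummable : Summable (fun n : ℕ => ∫ t in Ioc (0:ℝ) 1, ‖Φ n t‖) := by
    apply Summable.of_nonneg_of_le
      (fun n => integral_nonneg (fun t => norm_nonneg _)) hle
    exact (summable_pc_norm b hz').mul_right C
  -- interchange sum and integral
  have key := MeasureTheory.integral_tsum_of_summable_integral_norm
    (μ := volume.restrict (Ioc (0:ℝ) 1)) hInt hsummable
  -- rewrite the LHS
  rw [intervalIntegral.integral_of_le (zero_le_one)]
  have hcongr : (∫ t in Ioc (0:ℝ) 1, (t : ℂ) ^ (a - 1) * ((1 : ℂ) - (t : ℂ)) ^ (c - a - 1)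
      * (1 - z * (t : ℂ)) ^ (-b)) = ∫ t in Ioc (0:ℝ) 1, ∑' n, Φ n t := by
    apply setIntegral_congr_fun measurableSet_Ioc
    intro t ht
    exact ((hpt t ht).tsum_eq).symm
  rw [hcongr, ← key]
  -- evaluate each integral
  have hbeta : ∀ n : ℕ, (∫ t in Ioc (0:ℝ) 1, Φ n t)
      = pc b n * z ^ n * Complex.betaIntegral (a + n) (c - a) := by
    intro n
    rw [hΦ]
    simp only []
    rw [MeasureTheory.integral_const_mul, Complex.betaIntegral,
      intervalIntegral.integral_of_le (zero_le_one)]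
  -- nonvanishing facts
  have hGc : ∀ n : ℕ, Complex.Gamma (c + n) ≠ 0 := by
    intro n
    apply Complex.Gamma_ne_zero
    intro m hm
    apply hc (m + n)
    have : c = -(m:ℂ) - n := by linear_combination hm
    rw [this]; push_cast; ring
  have hcm : ∀ m : ℕ, c + (m:ℂ) ≠ 0 := by
    intro m h
    apply hc m
    linear_combination h
  have ham : ∀ m : ℕ, a + (m:ℂ) ≠ 0 := by
    intro m h
    have := hre m
    rw [h] at this
    simp at this
  -- final algebra
  have hterm : ∀ n : ℕ, (∫ t in Ioc (0:ℝ) 1, Φ n t)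
      = Complex.Gamma a * Complex.Gamma (c - a) / Complex.Gamma c
        * (((∏ m ∈ Finset.range n, (a + m)) * (∏ m ∈ Finset.range n, (b + m))
            / ((∏ m ∈ Finset.range n, (c + m)) * (Nat.factorial n))) * z ^ n) := by
    intro n
    rw [hbeta n, beta_eq (hre n) hca (by
      rw [show a + (n:ℂ) + (c - a) = c + n from by ring]; exact hGc n)]
    rw [show a + (n:ℂ) + (c - a) = c + n from by ring]
    rw [Gamma_shift ham n, Gamma_shift hcm n, pc]
    have h1 : Complex.Gamma c ≠ 0 := by simpa using hGc 0
    have h2 : (∏ m ∈ Finset.range n, (c + (m:ℂ))) ≠ 0 :=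
      Finset.prod_ne_zero_iff.2 fun m _ => hcm m
    have h3 : ((Nat.factorial n : ℂ)) ≠ 0 := Nat.cast_ne_zero.2 n.factorial_ne_zero
    field_simp
  calc (∑' n, ∫ t in Ioc (0:ℝ) 1, Φ n t)
      = ∑' n : ℕ, Complex.Gamma a * Complex.Gamma (c - a) / Complex.Gamma c
        * (((∏ m ∈ Finset.range n, (a + m)) * (∏ m ∈ Finset.range n, (b + m))
            / ((∏ m ∈ Finset.range n, (c + m)) * (Nat.factorial n))) * z ^ n) :=
        tsum_congr hterm
    _ = _ := tsum_mul_left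
end

section
/- Let a, b, c ∈ ℂ with 0 < Re(a) and 0 < Re(c-a), and define f₀₁(z) = ∫_{t=0}^{1} t^{a-1}(1-t)^{c-a-1}(1-zt)^{-b} dt and f_{∞0}(z) = ∫_{t=0}^{1} t^{a-1}(1-t)^{c-a}(1-zt)^{-b} dt, using principal complex powers. Then for every z ∈ ℂ with z ∉ [1,∞) and z ≠ 0, both functions are complex-differentiable at z and satisfy f₀₁'(z) = ((c-a-b)/(z-1))·f₀₁(z) + ((b-c)/(z-1))·f_{∞0}(z) and f_{∞0}'(z) = ((c-a)/z)·f₀₁(z) - (c/z)·f_{∞0}(z). -/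
open Complex
open Set MeasureTheory intervalIntegral Metric Real

/-- Measurability of `s ↦ s ^ w`. -/
lemma stmt14_measurable_cpow_const (w : ℂ) : Measurable (fun s : ℂ => s ^ w) := by
  have h : (fun s : ℂ => s ^ w) = fun s =>
      if s = 0 then (if w = 0 then 1 else 0) else Complex.exp (Complex.log s * w) := by
    funext s; rw [Complex.cpow_def]
  rw [h]
  exact Measurable.ite (measurableSet_eq) measurable_const
    ((Complex.measurable_log.mul_const w).cexp)

/-- Bound for complex powers with base bounded away from 0 and above. -/
lemma stmt14_cpow_bound {s : ℂ} (r : ℂ) {δ M : ℝ} (hδ : 0 < δ) (h1 : δ ≤ ‖s‖)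
    (h2 : ‖s‖ ≤ M) :
    ‖s ^ r‖ ≤ max (δ ^ r.re) (M ^ r.re) * Real.exp (π * |r.im|) := by
  have hs : s ≠ 0 := by
    intro h; rw [h, norm_zero] at h1; linarith
  rw [Complex.norm_cpow_of_ne_zero hs]
  have hb : ‖s‖ ^ r.re ≤ max (δ ^ r.re) (M ^ r.re) := by
    rcases le_or_gt 0 r.re with h | h
    · exact le_max_of_le_right (Real.rpow_le_rpow (by positivity) h2 h)
    · exact le_max_of_le_left (Real.rpow_le_rpow_of_nonpos hδ h1 h.le)
  have he : Real.exp (-(π * |r.im|)) ≤ Real.exp (s.arg * r.im) := by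
    rw [Real.exp_le_exp]
    have h1 : |s.arg * r.im| ≤ π * |r.im| := by
      rw [abs_mul]
      exact mul_le_mul_of_nonneg_right (Complex.abs_arg_le_pi s) (abs_nonneg _)
    linarith [neg_abs_le (s.arg * r.im)]
  calc ‖s‖ ^ r.re / Real.exp (s.arg * r.im)
      ≤ max (δ ^ r.re) (M ^ r.re) / Real.exp (-(π * |r.im|)) := by
        exact div_le_div₀ (le_max_of_le_left (Real.rpow_nonneg hδ.le _)) hb
          (Real.exp_pos _) he
    _ = max (δ ^ r.re) (M ^ r.re) * Real.exp (π * |r.im|) := by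
        rw [Real.exp_neg, div_inv_eq_mul]

/-- Integrability of beta-type integrands times a continuous factor. -/
lemma stmt14_integrable {p q : ℂ} (hp : -1 < p.re) (hq : -1 < q.re) {g : ℝ → ℂ}
    (hg : ContinuousOn g (Icc 0 1)) :
    IntervalIntegrable (fun t : ℝ => (t : ℂ) ^ p * ((1 : ℂ) - t) ^ q * g t) volume 0 1 := by
  have h := Complex.betaIntegral_convergent (u := p + 1) (v := q + 1)
    (by rw [add_re, one_re]; linarith) (by rw [add_re, one_re]; linarith)
  simp only [add_sub_cancel_right] at h
  exact h.mul_continuousOn (by rwa [Set.uIcc_of_le zero_le_one])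


/-- The twisted-cycle integrals `f₀₁(z) = ∫₀¹ t^{a-1}(1-t)^{c-a-1}(1-zt)^{-b} dt` and
`f_{∞0}(z) = ∫₀¹ t^{a-1}(1-t)^{c-a}(1-zt)^{-b} dt` satisfy the Haraoka first-order
Fuchsian system for Gauss' hypergeometric equation, for `z ∉ [1,∞)`, `z ≠ 0`. -/
theorem stmt14 (a b c : ℂ) (ha : 0 < a.re) (hca : 0 < (c - a).re)
    (f01 finf0 : ℂ → ℂ)
    (hf01 : ∀ w : ℂ, f01 w = ∫ t in (0 : ℝ)..1,
      (t : ℂ) ^ (a - 1) * ((1 : ℂ) - (t : ℂ)) ^ (c - a - 1) * (1 - w * (t : ℂ)) ^ (-b))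
    (hfinf0 : ∀ w : ℂ, finf0 w = ∫ t in (0 : ℝ)..1,
      (t : ℂ) ^ (a - 1) * ((1 : ℂ) - (t : ℂ)) ^ (c - a) * (1 - w * (t : ℂ)) ^ (-b))
    (z : ℂ) (hz1 : ∀ r : ℝ, 1 ≤ r → z ≠ (r : ℂ)) (hz0 : z ≠ 0) :
    HasDerivAt f01 ((c - a - b)/(z - 1) * f01 z + (b - c)/(z - 1) * finf0 z) z ∧
    HasDerivAt finf0 ((c - a)/z * f01 z - c/z * finf0 z) z := by
  -- basic real-part facts
  have hre1 : -1 < (a - 1).re := by rw [sub_re, one_re]; linarith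
  have hre2 : -1 < (c - a - 1).re := by rw [sub_re, one_re]; linarith
  have hre3 : -1 < a.re := by linarith
  have hre4 : -1 < (c - a).re := by linarith
  -- z ≠ 1
  have hz1' : z ≠ 1 := by simpa using hz1 1 le_rfl
  -- the base 1 - z t lies in the slit plane for t ∈ [0,1]
  have hslit : ∀ t : ℝ, t ∈ Icc (0:ℝ) 1 → (1 - z * t) ∈ slitPlane := by
    intro t ht
    rcases eq_or_ne z.im 0 with him | him
    · have hzre : z.re < 1 := by
        by_contra hle
        push_neg at hle
        exact hz1 z.re hle (Complex.ext (by simp) (by simp [him]))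
      left
      simp only [sub_re, one_re, mul_re, ofReal_re, ofReal_im, mul_zero, sub_zero]
      rcases le_or_gt z.re 0 with h | h
      · nlinarith [mul_nonneg (neg_nonneg.mpr h) ht.1]
      · nlinarith [mul_le_of_le_one_right h.le ht.2]
    · rcases eq_or_lt_of_le ht.1 with h0 | h0
      · left; simp [← h0]
      · right
        simp only [sub_im, one_im, mul_im, ofReal_re, ofReal_im, mul_zero, zero_sub,
          neg_ne_zero]
        simpa using mul_ne_zero him h0.ne'
  have hsne : ∀ t : ℝ, t ∈ Icc (0:ℝ) 1 → (1 - z * t) ≠ 0 :=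
    fun t ht => slitPlane_ne_zero (hslit t ht)
  -- continuity of the third factor for any exponent
  have hgcont : ∀ r : ℂ, ContinuousOn (fun t : ℝ => (1 - z * t) ^ r) (Icc 0 1) := by
    intro r t ht
    exact (ContinuousAt.cpow
      (continuous_const.sub (continuous_const.mul continuous_ofReal)).continuousAt
      continuousAt_const (hslit t ht)).continuousWithinAt
  -- integrability of all integrands appearing
  have hInt : ∀ p q r : ℂ, -1 < p.re → -1 < q.re →
      IntervalIntegrable (fun t : ℝ => (t : ℂ) ^ p * ((1 : ℂ) - t) ^ q * (1 - z * t) ^ r)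
        volume 0 1 :=
    fun p q r hp hq => stmt14_integrable hp hq (hgcont r)
  -- the almost-everywhere facts used for pointwise manipulations
  have hone : ∀ᵐ t : ℝ ∂volume, t ≠ 1 := by
    simp only [ae_iff, not_not]
    rw [show {t : ℝ | t = 1} = {1} from Set.setOf_eq_eq_singleton]
    exact measure_singleton 1
  have hmem : ∀ t : ℝ, t ∈ Set.uIoc (0:ℝ) 1 → 0 < t ∧ t ≤ 1 := by
    intro t ht
    rw [Set.uIoc_of_le zero_le_one] at ht
    exact ⟨ht.1, ht.2⟩
  -- compactness: a ball around z on which 1 - x*t stays in the slit plane, away from 0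
  obtain ⟨t₀, ht₀, hmin⟩ := isCompact_Icc.exists_isMinOn (Set.nonempty_Icc.mpr zero_le_one)
    (((Metric.continuous_infDist_pt slitPlaneᶜ).comp
      (continuous_const.sub (continuous_const.mul continuous_ofReal))).continuousOn :
      ContinuousOn (fun t : ℝ => Metric.infDist (1 - z * t) slitPlaneᶜ) (Icc 0 1))
  set δ := Metric.infDist (1 - z * t₀) slitPlaneᶜ with hδdef
  have hδpos : 0 < δ := by
    rw [hδdef]
    refine (IsClosed.notMem_iff_infDist_pos isOpen_slitPlane.isClosed_compl
      ⟨0, by simp⟩).mp ?_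
    simpa using hslit t₀ ht₀
  have hball : ∀ x ∈ Metric.ball z (δ/2), ∀ t ∈ Icc (0:ℝ) 1,
      (1 - x * t) ∈ slitPlane ∧ δ/2 ≤ ‖1 - x * t‖ ∧
        ‖1 - x * t‖ ≤ 1 + (‖z‖ + δ/2) := by
    intro x hx t ht
    have habs_t : ‖(t:ℂ)‖ ≤ 1 := by
      simpa [_root_.abs_of_nonneg ht.1] using ht.2
    have hxz : ‖x - z‖ ≤ δ/2 := by
      rw [← Complex.dist_eq]
      exact le_of_lt (by simpa [dist_comm] using hx)
    have hdist : ‖(1 - z * t) - (1 - x * t)‖ ≤ δ/2 := by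
      rw [show (1 - z * t) - (1 - x * t) = (x - z) * (t:ℂ) by ring, norm_mul]
      calc ‖x - z‖ * ‖(t:ℂ)‖
          ≤ (δ/2) * 1 :=
            mul_le_mul hxz habs_t (norm_nonneg _) (by positivity)
        _ = δ/2 := mul_one _
    have hmin' : δ ≤ Metric.infDist (1 - z * t) slitPlaneᶜ := hmin ht
    have hzt : δ ≤ ‖1 - z * t‖ := by
      refine hmin'.trans ?_
      simpa [Complex.dist_eq] using
        Metric.infDist_le_dist_of_mem (show (0:ℂ) ∈ slitPlaneᶜ by simp)
    refine ⟨?_, ?_, ?_⟩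
    · by_contra hmem'
      have : Metric.infDist (1 - z * t) slitPlaneᶜ ≤ δ/2 :=
        (Metric.infDist_le_dist_of_mem (Set.mem_compl hmem')).trans (by rw [Complex.dist_eq]; exact hdist)
      linarith
    · have htri : ‖1 - z * t‖ ≤
          ‖(1 - z * t) - (1 - x * t)‖ + ‖1 - x * t‖ := by
        have := norm_sub_le_norm_sub_add_norm_sub (1 - z * t) (1 - x * t) 0; simp only [sub_zero] at this; exact this
      linarith
    · have h1 := norm_sub_le (1:ℂ) (x * t)
      rw [norm_mul] at h1
      have hx' : ‖x‖ ≤ ‖z‖ + δ/2 := by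
        have htri2 : ‖x‖ ≤ ‖x - z‖ + ‖z‖ := by
          have := norm_sub_le_norm_sub_add_norm_sub x z 0; simp only [sub_zero] at this; exact this
        linarith
      have := mul_le_mul hx' habs_t (norm_nonneg _) (by positivity)
      simp only [norm_one] at h1
      nlinarith [norm_nonneg (x:ℂ)]
  -- uniform bound for the cpow factor on the ball
  set Cb : ℝ := max ((δ/2) ^ (-b-1).re) ((1 + (‖z‖ + δ/2)) ^ (-b-1).re) *
    Real.exp (π * |(-b-1).im|) with hCbdef
  have hCb : ∀ x ∈ Metric.ball z (δ/2), ∀ t ∈ Icc (0:ℝ) 1,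
      ‖(1 - x * t) ^ (-b-1)‖ ≤ Cb := by
    intro x hx t ht
    obtain ⟨-, h1, h2⟩ := hball x hx t ht
    exact stmt14_cpow_bound _ (by positivity) h1 h2
  have hCb0 : 0 ≤ Cb := le_trans (norm_nonneg _)
    (hCb z (Metric.mem_ball_self (by positivity)) 0 (by simp))
  -- differentiation under the integral sign
  have hDeriv : ∀ q : ℂ, -1 < q.re →
      HasDerivAt (fun w : ℂ => ∫ t in (0:ℝ)..1,
          (t:ℂ)^(a-1) * ((1:ℂ)-t)^q * (1 - w * (t:ℂ))^(-b))
        (∫ t in (0:ℝ)..1,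
          (t:ℂ)^(a-1) * ((1:ℂ)-t)^q * (-b * (1 - z * (t:ℂ))^(-b-1) * (-(t:ℂ)))) z := by
    intro q hq
    have hbeta : IntervalIntegrable (fun t : ℝ => (t:ℂ)^(a-1) * ((1:ℂ)-t)^q) volume 0 1 := by
      have := stmt14_integrable hre1 hq (g := fun _ => 1) continuousOn_const
      simpa using this
    refine (intervalIntegral.hasDerivAt_integral_of_dominated_loc_of_deriv_le
      (F := fun w t => (t:ℂ)^(a-1) * ((1:ℂ)-t)^q * (1 - w * (t:ℂ))^(-b))
      (F' := fun w t => (t:ℂ)^(a-1) * ((1:ℂ)-t)^q * (-b * (1 - w * (t:ℂ))^(-b-1) * (-(t:ℂ))))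
      (bound := fun t => (‖b‖ * Cb) * ‖(t:ℂ)^(a-1) * ((1:ℂ)-t)^q‖)
      (s := Metric.ball z (δ/2)) (Metric.ball_mem_nhds z (half_pos hδpos)) ?_ ?_ ?_ ?_ ?_ ?_).2
    · refine Filter.Eventually.of_forall fun x => Measurable.aestronglyMeasurable ?_
      exact (((stmt14_measurable_cpow_const (a-1)).comp measurable_ofReal).mul
        ((stmt14_measurable_cpow_const q).comp (measurable_const.sub measurable_ofReal))).mul
        ((stmt14_measurable_cpow_const (-b)).comp
          (measurable_const.sub (measurable_ofReal.const_mul x)))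
    · exact hInt (a-1) q (-b) hre1 hq
    · apply Measurable.aestronglyMeasurable
      exact (((stmt14_measurable_cpow_const (a-1)).comp measurable_ofReal).mul
        ((stmt14_measurable_cpow_const q).comp (measurable_const.sub measurable_ofReal))).mul
        (((measurable_const.mul ((stmt14_measurable_cpow_const (-b-1)).comp
          (measurable_const.sub (measurable_ofReal.const_mul z))))).mul
          measurable_ofReal.neg)
    · refine Filter.Eventually.of_forall fun t ht x hx => ?_
      have htI : t ∈ Icc (0:ℝ) 1 := ⟨(hmem t ht).1.le, (hmem t ht).2⟩
      have habs_t : ‖(t:ℂ)‖ ≤ 1 := by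
        simpa [_root_.abs_of_nonneg htI.1] using htI.2
      have h1 : ‖-b * (1 - x * (t:ℂ))^(-b-1) * (-(t:ℂ))‖ ≤ ‖b‖ * Cb := by
        rw [norm_mul, norm_mul, norm_neg, norm_neg]
        calc ‖b‖ * ‖(1 - x * (t:ℂ))^(-b-1)‖ * ‖(t:ℂ)‖
            ≤ (‖b‖ * Cb) * 1 := by
              refine mul_le_mul ?_ habs_t (norm_nonneg _) (by positivity)
              exact mul_le_mul_of_nonneg_left (hCb x hx t htI) (norm_nonneg _)
          _ = ‖b‖ * Cb := mul_one _
      rw [norm_mul]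
      show _ ≤ ‖b‖ * Cb * ‖(t:ℂ)^(a-1) * ((1:ℂ)-t)^q‖
      rw [mul_comm (‖b‖ * Cb)]
      exact mul_le_mul_of_nonneg_left h1 (norm_nonneg _)
    · exact hbeta.norm.const_mul _
    · refine Filter.Eventually.of_forall fun t ht x hx => ?_
      have htI : t ∈ Icc (0:ℝ) 1 := ⟨(hmem t ht).1.le, (hmem t ht).2⟩
      have hinner : HasDerivAt (fun w : ℂ => 1 - w * (t:ℂ)) (-(t:ℂ)) x := by
        simpa using ((hasDerivAt_id x).mul_const (t:ℂ)).const_sub 1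
      exact (hinner.cpow_const (c := -b) (hball x hx t htI).1).const_mul _
  -- specialize and name the five integrals
  have h01z := hf01 z
  have hinfz := hfinf0 z
  set J1 := ∫ t in (0:ℝ)..1, (t:ℂ)^(a-1) * ((1:ℂ)-(t:ℂ))^(c-a-1) * (1 - z * (t:ℂ))^(-b) with hJ1
  set J2 := ∫ t in (0:ℝ)..1, (t:ℂ)^(a-1) * ((1:ℂ)-(t:ℂ))^(c-a) * (1 - z * (t:ℂ))^(-b) with hJ2
  set J3 := ∫ t in (0:ℝ)..1, (t:ℂ)^a * ((1:ℂ)-(t:ℂ))^(c-a-1) * (1 - z * (t:ℂ))^(-b) with hJ3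
  set J4 := ∫ t in (0:ℝ)..1, (t:ℂ)^a * ((1:ℂ)-(t:ℂ))^(c-a-1) * (1 - z * (t:ℂ))^(-b-1) with hJ4
  set J5 := ∫ t in (0:ℝ)..1, (t:ℂ)^a * ((1:ℂ)-(t:ℂ))^(c-a) * (1 - z * (t:ℂ))^(-b-1) with hJ5
  -- pointwise power manipulation facts
  have hpow : ∀ t : ℝ, 0 < t → t < 1 →
      (t:ℂ)^(a-1) * (t:ℂ) = (t:ℂ)^a ∧
      (((1:ℂ)-(t:ℂ))^(c-a-1) * ((1:ℂ)-(t:ℂ)) = ((1:ℂ)-(t:ℂ))^(c-a)) ∧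
      ((1 - z * (t:ℂ))^(-b-1) * (1 - z * (t:ℂ)) = (1 - z * (t:ℂ))^(-b)) := by
    intro t ht0 ht1
    have ht0' : (t:ℂ) ≠ 0 := ofReal_ne_zero.mpr ht0.ne'
    have ht1' : (1:ℂ) - (t:ℂ) ≠ 0 := by
      rw [show (1:ℂ) - (t:ℂ) = ((1 - t : ℝ) : ℂ) by push_cast; ring]
      exact ofReal_ne_zero.mpr (by linarith)
    have hsne' : (1 - z * (t:ℂ)) ≠ 0 := hsne t ⟨ht0.le, ht1.le⟩
    refine ⟨?_, ?_, ?_⟩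
    · rw [Complex.cpow_sub _ _ ht0', Complex.cpow_one, div_mul_cancel₀ _ ht0']
    · rw [show c - a - 1 = (c-a) - 1 by ring, Complex.cpow_sub _ _ ht1', Complex.cpow_one,
        div_mul_cancel₀ _ ht1']
    · rw [show -b - 1 = (-b) - 1 by ring, Complex.cpow_sub _ _ hsne', Complex.cpow_one,
        div_mul_cancel₀ _ hsne']
  -- derivative of f01
  have hd1 : HasDerivAt f01 (b * J4) z := by
    have h := hDeriv (c-a-1) hre2
    rw [show f01 = fun w : ℂ => ∫ t in (0:ℝ)..1,
      (t:ℂ)^(a-1) * ((1:ℂ)-(t:ℂ))^(c-a-1) * (1 - w * (t:ℂ))^(-b) from funext hf01]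
    convert h using 1
    rw [hJ4, ← intervalIntegral.integral_const_mul]
    apply intervalIntegral.integral_congr_ae
    filter_upwards [hone] with t htne htI
    obtain ⟨ht0, hle⟩ := hmem t htI
    obtain ⟨hta, -, -⟩ := hpow t ht0 (lt_of_le_of_ne hle htne)
    rw [← hta]; ring
  -- derivative of finf0
  have hd2 : HasDerivAt finf0 (b * J5) z := by
    have h := hDeriv (c-a) hre4
    rw [show finf0 = fun w : ℂ => ∫ t in (0:ℝ)..1,
      (t:ℂ)^(a-1) * ((1:ℂ)-(t:ℂ))^(c-a) * (1 - w * (t:ℂ))^(-b) from funext hfinf0]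
    convert h using 1
    rw [hJ5, ← intervalIntegral.integral_const_mul]
    apply intervalIntegral.integral_congr_ae
    filter_upwards [hone] with t htne htI
    obtain ⟨ht0, hle⟩ := hmem t htI
    obtain ⟨hta, -, -⟩ := hpow t ht0 (lt_of_le_of_ne hle htne)
    rw [← hta]; ring
  -- relation E1 : J3 = J1 - J2
  have hE1 : J3 = J1 - J2 := by
    rw [hJ1, hJ2, hJ3,
      ← intervalIntegral.integral_sub (hInt (a-1) (c-a-1) (-b) hre1 hre2)
        (hInt (a-1) (c-a) (-b) hre1 hre4)]
    apply intervalIntegral.integral_congr_ae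
    filter_upwards [hone] with t htne htI
    obtain ⟨ht0, hle⟩ := hmem t htI
    obtain ⟨hta, htb, -⟩ := hpow t ht0 (lt_of_le_of_ne hle htne)
    rw [← hta, ← htb]; ring
  -- relation E2 : J3 = (1-z) * J4 + z * J5
  have hE2 : J3 = (1-z) * J4 + z * J5 := by
    rw [hJ3, hJ4, hJ5, ← intervalIntegral.integral_const_mul,
      ← intervalIntegral.integral_const_mul,
      ← intervalIntegral.integral_add ((hInt a (c-a-1) (-b-1) hre3 hre2).const_mul (1-z))
        ((hInt a (c-a) (-b-1) hre3 hre4).const_mul z)]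
    apply intervalIntegral.integral_congr_ae
    filter_upwards [hone] with t htne htI
    obtain ⟨ht0, hle⟩ := hmem t htI
    obtain ⟨-, htb, htc⟩ := hpow t ht0 (lt_of_le_of_ne hle htne)
    rw [← htc, ← htb]; ring
  -- integration by parts : a * J2 - (c-a) * J3 + (b*z) * J5 = 0
  have hIBP : a * J2 - (c-a) * J3 + (b*z) * J5 = 0 := by
    have hGc : ContinuousOn
        (fun s : ℝ => (s:ℂ)^a * ((1:ℂ)-(s:ℂ))^(c-a) * (1 - z * (s:ℂ))^(-b)) (Icc 0 1) := by
      refine ContinuousOn.mul (ContinuousOn.mul ?_ ?_) (hgcont (-b))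
      · intro t ht
        exact ((continuousAt_cpow_const_of_re_pos (Or.inl (by simpa using ht.1)) ha).comp
          continuous_ofReal.continuousAt).continuousWithinAt
      · intro t ht
        refine ((continuousAt_cpow_const_of_re_pos (Or.inl ?_) hca).comp
          (continuous_const.sub continuous_ofReal).continuousAt).continuousWithinAt
        show 0 ≤ ((1:ℂ) - (t:ℂ)).re
        simp only [sub_re, one_re, ofReal_re, ofReal_im, sub_im, one_im]
        simpa using ht.2
    have hGd : ∀ t ∈ Ioo (0:ℝ) 1, HasDerivAt
        (fun s : ℝ => (s:ℂ)^a * ((1:ℂ)-(s:ℂ))^(c-a) * (1 - z * (s:ℂ))^(-b))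
        (a * ((t:ℂ)^(a-1) * ((1:ℂ)-(t:ℂ))^(c-a) * (1 - z * (t:ℂ))^(-b))
          - (c-a) * ((t:ℂ)^a * ((1:ℂ)-(t:ℂ))^(c-a-1) * (1 - z * (t:ℂ))^(-b))
          + (b*z) * ((t:ℂ)^a * ((1:ℂ)-(t:ℂ))^(c-a) * (1 - z * (t:ℂ))^(-b-1))) t := by
      intro t ht
      have U : HasDerivAt (fun y : ℂ => y^a) (a * (t:ℂ)^(a-1) * 1) (t:ℂ) :=
        (hasDerivAt_id (t:ℂ)).cpow_const (Or.inl (by simpa using ht.1))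
      have V : HasDerivAt (fun y : ℂ => ((1:ℂ)-y)^(c-a))
          ((c-a) * ((1:ℂ)-(t:ℂ))^(c-a-1) * (-1)) (t:ℂ) := by
        refine HasDerivAt.cpow_const ?_ (Or.inl ?_)
        · simpa using (hasDerivAt_id (t:ℂ)).const_sub 1
        · simpa [sub_re] using ht.2
      have W : HasDerivAt (fun y : ℂ => (1 - z*y)^(-b))
          ((-b) * (1 - z * (t:ℂ))^(-b-1) * (-z)) (t:ℂ) := by
        refine HasDerivAt.cpow_const ?_ (hslit t (Ioo_subset_Icc_self ht))
        simpa using ((hasDerivAt_id (t:ℂ)).const_mul z).const_sub 1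
      have := ((U.mul V).mul W).comp_ofReal
      convert this using 1
      · rfl
      simp only [Pi.mul_apply]
      rw [show c - a - 1 = (c-a) - 1 by ring, show -b - 1 = (-b) - 1 by ring]
      ring
    have hint : IntervalIntegrable
        (fun t : ℝ => a * ((t:ℂ)^(a-1) * ((1:ℂ)-(t:ℂ))^(c-a) * (1 - z * (t:ℂ))^(-b))
          - (c-a) * ((t:ℂ)^a * ((1:ℂ)-(t:ℂ))^(c-a-1) * (1 - z * (t:ℂ))^(-b))
          + (b*z) * ((t:ℂ)^a * ((1:ℂ)-(t:ℂ))^(c-a) * (1 - z * (t:ℂ))^(-b-1))) volume 0 1 :=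
      (((hInt (a-1) (c-a) (-b) hre1 hre4).const_mul a).sub
        ((hInt a (c-a-1) (-b) hre3 hre2).const_mul (c-a))).add
        ((hInt a (c-a) (-b-1) hre3 hre4).const_mul (b*z))
    have hev := intervalIntegral.integral_eq_sub_of_hasDerivAt_of_le zero_le_one hGc hGd hint
    have hF0 : ((0:ℝ):ℂ)^a * ((1:ℂ)-((0:ℝ):ℂ))^(c-a) * (1 - z * ((0:ℝ):ℂ))^(-b) = 0 := by
      rw [ofReal_zero, Complex.zero_cpow (fun h => by simp [h] at ha)]
      ring
    have hF1 : ((1:ℝ):ℂ)^a * ((1:ℂ)-((1:ℝ):ℂ))^(c-a) * (1 - z * ((1:ℝ):ℂ))^(-b) = 0 := by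
      rw [ofReal_one, sub_self, Complex.zero_cpow (fun h => by simp [h] at hca)]
      ring
    rw [hF0, hF1, sub_zero] at hev
    rw [intervalIntegral.integral_add (((hInt (a-1) (c-a) (-b) hre1 hre4).const_mul a).sub
        ((hInt a (c-a-1) (-b) hre3 hre2).const_mul (c-a)))
        ((hInt a (c-a) (-b-1) hre3 hre4).const_mul (b*z)),
      intervalIntegral.integral_sub ((hInt (a-1) (c-a) (-b) hre1 hre4).const_mul a)
        ((hInt a (c-a-1) (-b) hre3 hre2).const_mul (c-a)),
      intervalIntegral.integral_const_mul, intervalIntegral.integral_const_mul,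
      intervalIntegral.integral_const_mul] at hev
    rw [hJ2, hJ3, hJ5]
    exact hev
  -- assemble
  have hfz1 : f01 z = J1 := h01z
  have hfz2 : finf0 z = J2 := hinfz
  have hzm : z - 1 ≠ 0 := sub_ne_zero.mpr hz1'
  have key1 : (c-a-b) * J1 + (b-c) * J2 = b * J4 * (z-1) := by
    linear_combination (a+b-c) * hE1 - b * hE2 - hIBP
  have key2 : (c-a) * J1 - c * J2 = b * J5 * z := by
    linear_combination (a-c) * hE1 - hIBP
  constructor
  · have heq : (c - a - b)/(z - 1) * f01 z + (b - c)/(z - 1) * finf0 z = b * J4 := by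
      rw [hfz1, hfz2]
      field_simp
      linear_combination key1
    rw [heq]; exact hd1
  · have heq : (c - a)/z * f01 z - c/z * finf0 z = b * J5 := by
      rw [hfz1, hfz2]
      field_simp
      linear_combination key2
    rw [heq]; exact hd2
end

section
/- Let a, b, c ∈ ℂ with 0 < Re(a) and 0 < Re(c-a), and define f(z) = ∫_{t=0}^{1} t^{a-1}(1-t)^{c-a-1}(1-zt)^{-b} dt using principal complex powers. Then f is twice complex-differentiable on ℂ ∖ [1,∞) and for every z ∈ ℂ ∖ [1,∞): z(1-z)·f''(z) + (c-(a+b+1)z)·f'(z) - a·b·f(z) = 0. -/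
open Complex

namespace Stmt15Aux

open Set MeasureTheory Metric

/-- The slit domain `ℂ ∖ [1,∞)`. -/
def U : Set ℂ := {z : ℂ | ∀ r : ℝ, 1 ≤ r → z ≠ (r : ℂ)}

lemma isOpen_U : IsOpen U := by
  have h : U = ((fun r : ℝ => (r : ℂ)) '' Ici 1)ᶜ := by
    ext z
    simp only [U, mem_setOf_eq, mem_compl_iff, mem_image, mem_Ici, not_exists, not_and]
    exact ⟨fun h r hr => (h r hr).symm, fun h r hr hzr => (h r hr) hzr.symm⟩
  rw [h]
  exact (Complex.isometry_ofReal.isClosedEmbedding.isClosedMap _ isClosed_Ici).isOpen_compl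

lemma slit {z : ℂ} (hz : z ∈ U) {t : ℝ} (ht : t ∈ Icc (0:ℝ) 1) :
    1 - z * (t : ℂ) ∈ slitPlane := by
  by_contra h
  rw [mem_slitPlane_iff] at h
  push_neg at h
  obtain ⟨hre, him⟩ := h
  simp only [sub_re, one_re, mul_re, ofReal_re, ofReal_im, mul_zero, sub_zero] at hre
  simp only [sub_im, one_im, mul_im, ofReal_re, ofReal_im, mul_zero, zero_add, add_zero, zero_sub,
    neg_eq_zero] at him
  have ht0 : 0 < t := by
    rcases lt_or_eq_of_le ht.1 with h' | h'
    · exact h'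
    · exfalso; rw [← h'] at hre; simp at hre; linarith
  have hzim : z.im = 0 := by
    rcases mul_eq_zero.mp him with h' | h'
    · exact h'
    · exact absurd h' (ne_of_gt ht0)
  have hzre : 1 ≤ z.re := by nlinarith [ht.2, ht0]
  exact hz z.re hzre (Complex.ext rfl hzim)


/-- The family of integrands. -/
noncomputable def F (a b c : ℂ) (m : ℂ) (z : ℂ) (t : ℝ) : ℂ :=
  (t : ℂ) ^ (a - 1 + m) * ((1 : ℂ) - (t : ℂ)) ^ (c - a - 1) * (1 - z * (t : ℂ)) ^ (-b - m)

lemma contOn_w (b m z : ℂ) (hz : z ∈ U) :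
    ContinuousOn (fun t : ℝ => (1 - z * (t : ℂ)) ^ (-b - m)) (Icc (0:ℝ) 1) := by
  intro t ht
  exact (ContinuousAt.cpow (f := fun t : ℝ => 1 - z * (t : ℂ)) (g := fun _ => -b - m)
    (by fun_prop) continuousAt_const (slit hz ht)).continuousWithinAt

lemma F_intble {a c : ℂ} (b : ℂ) (ha : 0 < a.re) (hca : 0 < (c - a).re)
    (m : ℂ) (hm : 0 ≤ m.re) {z : ℂ} (hz : z ∈ U) :
    IntervalIntegrable (F a b c m z) volume 0 1 := by
  have hbeta : IntervalIntegrable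
      (fun x : ℝ => (x : ℂ) ^ (a - 1 + m) * ((1:ℂ) - (x : ℂ)) ^ (c - a - 1)) volume 0 1 := by
    have h := Complex.betaIntegral_convergent (u := a + m) (v := c - a)
      (by rw [add_re]; linarith) hca
    simpa only [show a + m - 1 = a - 1 + m by ring] using h
  exact hbeta.mul_continuousOn (by rw [uIcc_of_le zero_le_one]; exact contOn_w b m z hz)


set_option maxHeartbeats 1000000 in
lemma deriv_step {a c : ℂ} (b : ℂ) (ha : 0 < a.re) (hca : 0 < (c - a).re)
    (m : ℂ) (hm : 0 ≤ m.re) {z₀ : ℂ} (hz₀ : z₀ ∈ U) :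
    HasDerivAt (fun z => ∫ t in (0:ℝ)..1, F a b c m z t)
      ((b + m) * ∫ t in (0:ℝ)..1, F a b c (m + 1) z₀ t) z₀ := by
  obtain ⟨ε, hε, hball⟩ : ∃ ε > 0, closedBall z₀ ε ⊆ U := by
    rcases Metric.isOpen_iff.mp isOpen_U z₀ hz₀ with ⟨δ, hδ, hδU⟩
    exact ⟨δ/2, by linarith, (closedBall_subset_ball (by linarith)).trans hδU⟩
  obtain ⟨K, hK⟩ : ∃ K, ∀ p ∈ closedBall z₀ ε ×ˢ Icc (0:ℝ) 1,
      ‖(1 - p.1 * (p.2 : ℂ)) ^ (-b - (m+1))‖ ≤ K := by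
    have hc : ContinuousOn (fun p : ℂ × ℝ => (1 - p.1 * (p.2 : ℂ)) ^ (-b - (m+1)))
        (closedBall z₀ ε ×ˢ Icc (0:ℝ) 1) := by
      intro p hp
      exact (ContinuousAt.cpow (f := fun p : ℂ × ℝ => 1 - p.1 * (p.2 : ℂ))
        (g := fun _ => -b - (m+1)) (by fun_prop) continuousAt_const
        (slit (hball hp.1) hp.2)).continuousWithinAt
    exact ((isCompact_closedBall z₀ ε).prod isCompact_Icc).exists_bound_of_continuousOn hc
  have hm1 : (0:ℝ) ≤ (m + 1).re := by rw [add_re, one_re]; linarith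
  have hbeta : IntervalIntegrable
      (fun x : ℝ => (x : ℂ) ^ (a - 1 + (m+1)) * ((1:ℂ) - (x : ℂ)) ^ (c - a - 1)) volume 0 1 := by
    have h := Complex.betaIntegral_convergent (u := a + (m+1)) (v := c - a)
      (by rw [add_re]; linarith) hca
    simpa only [show a + (m+1) - 1 = a - 1 + (m+1) by ring] using h
  have hmeas : ∀ᶠ z in nhds z₀, AEStronglyMeasurable (fun t => F a b c m z t)
      (volume.restrict (Set.uIoc (0:ℝ) 1)) :=
    Filter.eventually_of_mem (isOpen_U.mem_nhds hz₀) fun z hz =>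
      (intervalIntegrable_iff.mp (F_intble b ha hca m hm hz)).aestronglyMeasurable
  have hint : IntervalIntegrable (fun t => F a b c m z₀ t) volume 0 1 :=
    F_intble b ha hca m hm hz₀
  have hmeas' : AEStronglyMeasurable (fun t => (b + m) * F a b c (m+1) z₀ t)
      (volume.restrict (Set.uIoc (0:ℝ) 1)) :=
    ((intervalIntegrable_iff.mp
      (F_intble b ha hca (m+1) hm1 hz₀)).aestronglyMeasurable).const_mul _
  have hbound : ∀ᵐ t ∂(volume : Measure ℝ), t ∈ Set.uIoc (0:ℝ) 1 → ∀ z ∈ ball z₀ ε,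
      ‖(b + m) * F a b c (m+1) z t‖ ≤
        ‖b + m‖ * K * ‖(t:ℂ) ^ (a - 1 + (m+1)) * ((1:ℂ) - (t:ℂ)) ^ (c - a - 1)‖ := by
    refine Filter.Eventually.of_forall fun t htI z hzb => ?_
    rw [uIoc_of_le zero_le_one] at htI
    have hw : ‖(1 - z * (t:ℂ)) ^ (-b - (m+1))‖ ≤ K :=
      hK ⟨z, t⟩ ⟨ball_subset_closedBall hzb, Ioc_subset_Icc_self htI⟩
    rw [norm_mul, F, norm_mul]
    calc ‖b + m‖ * (‖(t:ℂ) ^ (a - 1 + (m+1)) * ((1:ℂ) - (t:ℂ)) ^ (c - a - 1)‖ *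
            ‖(1 - z * (t:ℂ)) ^ (-b - (m+1))‖)
        = ‖b + m‖ * ‖(1 - z * (t:ℂ)) ^ (-b - (m+1))‖ *
            ‖(t:ℂ) ^ (a - 1 + (m+1)) * ((1:ℂ) - (t:ℂ)) ^ (c - a - 1)‖ := by ring
      _ ≤ ‖b + m‖ * K * ‖(t:ℂ) ^ (a - 1 + (m+1)) * ((1:ℂ) - (t:ℂ)) ^ (c - a - 1)‖ := by
          gcongr
  have hbint : IntervalIntegrable
      (fun t => ‖b + m‖ * K * ‖(t:ℂ) ^ (a - 1 + (m+1)) * ((1:ℂ) - (t:ℂ)) ^ (c - a - 1)‖)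
      volume 0 1 := hbeta.norm.const_mul _
  have hdiff : ∀ᵐ t ∂(volume : Measure ℝ), t ∈ Set.uIoc (0:ℝ) 1 → ∀ z ∈ ball z₀ ε,
      HasDerivAt (fun z => F a b c m z t) ((b + m) * F a b c (m+1) z t) z := by
    refine Filter.Eventually.of_forall fun t htI z hzb => ?_
    rw [uIoc_of_le zero_le_one] at htI
    have hts : t ∈ Icc (0:ℝ) 1 := Ioc_subset_Icc_self htI
    have ht0 : (t:ℂ) ≠ 0 := by exact_mod_cast (ne_of_gt htI.1)
    have hslit := slit (hball (ball_subset_closedBall hzb)) hts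
    have h1 : HasDerivAt (fun z : ℂ => 1 - z * (t:ℂ)) (-(t:ℂ)) z := by
      simpa using ((hasDerivAt_id z).mul_const (t:ℂ)).const_sub 1
    have h3 := (h1.cpow_const (c := -b - m) hslit).const_mul
      ((t:ℂ) ^ (a - 1 + m) * ((1:ℂ) - (t:ℂ)) ^ (c - a - 1))
    convert h3 using 1
    case e'_4 => rfl
    case e'_5 => rfl
    case e'_8 => rfl
    rw [F, show a - 1 + (m+1) = (a - 1 + m) + 1 by ring,
      show -b - (m+1) = (-b - m) - 1 by ring, Complex.cpow_add _ _ ht0, Complex.cpow_one]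
    ring
  have h := intervalIntegral.hasDerivAt_integral_of_dominated_loc_of_deriv_le
    (F := fun z t => F a b c m z t) (F' := fun z t => (b + m) * F a b c (m+1) z t)
    (x₀ := z₀) (a := (0:ℝ)) (b := 1) (μ := volume)
    (bound := fun t => ‖b + m‖ * K * ‖(t:ℂ) ^ (a - 1 + (m+1)) * ((1:ℂ) - (t:ℂ)) ^ (c - a - 1)‖)
    (ball_mem_nhds z₀ hε) hmeas hint hmeas' hbound hbint hdiff
  have h2 := h.2
  rwa [intervalIntegral.integral_const_mul] at h2


set_option maxHeartbeats 1000000 in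
lemma ftc {a c : ℂ} (b : ℂ) (ha : 0 < a.re) (hca : 0 < (c - a).re) {z : ℂ} (hz : z ∈ U) :
    (∫ t in (0:ℝ)..1, (z * (1 - z) * (b + 1) * F a b c 2 z t
      + (c - (a + b + 1) * z) * F a b c 1 z t - a * F a b c 0 z t)) = 0 := by
  have ha0 : a ≠ 0 := fun h => by simp [h] at ha
  have hca0 : c - a ≠ 0 := fun h => by simp [h] at hca
  set G : ℝ → ℂ := fun t => (t:ℂ) ^ a * ((1:ℂ) - (t:ℂ)) ^ (c - a) * (1 - z * (t:ℂ)) ^ (-b - 1)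
    with hG
  set comb : ℝ → ℂ := fun t => z * (1 - z) * (b + 1) * F a b c 2 z t
      + (c - (a + b + 1) * z) * F a b c 1 z t - a * F a b c 0 z t with hcomb
  have hcont : ContinuousOn G (Icc (0:ℝ) 1) := by
    have c1 : Continuous fun t : ℝ => (t:ℂ) ^ a := Complex.continuous_ofReal_cpow_const ha
    have c2 : Continuous fun t : ℝ => ((1:ℂ) - (t:ℂ)) ^ (c - a) := by
      have h := (Complex.continuous_ofReal_cpow_const hca).comp
        (continuous_const.sub continuous_id : Continuous fun t : ℝ => 1 - t)
      have he : (fun t : ℝ => ((1:ℂ) - (t:ℂ)) ^ (c - a))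
          = fun t : ℝ => (((1 - t : ℝ)) : ℂ) ^ (c - a) := by
        funext t; norm_cast
      rw [he]; exact h
    exact ((c1.mul c2).continuousOn).mul (contOn_w b 1 z hz)
  have hderiv : ∀ t ∈ Ioo (0:ℝ) 1, HasDerivWithinAt G (-(comb t)) (Ioi t) t := by
    intro t ht
    obtain ⟨ht0, ht1⟩ := ht
    have hts : t ∈ Icc (0:ℝ) 1 := ⟨ht0.le, ht1.le⟩
    have htc0 : (t:ℂ) ≠ 0 := by exact_mod_cast ne_of_gt ht0
    have h1t : ((1:ℂ) - (t:ℂ)) ∈ slitPlane := by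
      rw [show (1:ℂ) - (t:ℂ) = ((1 - t : ℝ) : ℂ) by push_cast; ring]
      exact ofReal_mem_slitPlane.2 (by linarith)
    have h1t0 : ((1:ℂ) - (t:ℂ)) ≠ 0 := slitPlane_ne_zero h1t
    have hwslit := slit hz hts
    have hw0 : (1 - z * (t:ℂ)) ≠ 0 := slitPlane_ne_zero hwslit
    have hA : HasDerivAt (fun y : ℝ => (y:ℂ) ^ a) (a * (t:ℂ) ^ (a - 1)) t := by
      have h := ((hasDerivAt_id ((t:ℝ):ℂ)).cpow_const (c := a)
        (by simpa using ofReal_mem_slitPlane.2 ht0)).comp_ofReal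
      simpa using h
    have hB : HasDerivAt (fun y : ℝ => ((1:ℂ) - (y:ℂ)) ^ (c - a))
        ((c - a) * ((1:ℂ) - (t:ℂ)) ^ (c - a - 1) * (-1)) t := by
      have h1 : HasDerivAt (fun w : ℂ => 1 - w) (-1 : ℂ) ((t:ℝ):ℂ) := by
        simpa using (hasDerivAt_id ((t:ℝ):ℂ)).const_sub 1
      exact (h1.cpow_const (c := c - a) h1t).comp_ofReal
    have hC : HasDerivAt (fun y : ℝ => (1 - z * (y:ℂ)) ^ (-b - 1))
        ((-b - 1) * (1 - z * (t:ℂ)) ^ (-b - 1 - 1) * (-z)) t := by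
      have h1 : HasDerivAt (fun w : ℂ => 1 - z * w) (-z) ((t:ℝ):ℂ) := by
        simpa using ((hasDerivAt_id ((t:ℝ):ℂ)).const_mul z).const_sub 1
      exact (h1.cpow_const (c := -b - 1) hwslit).comp_ofReal
    have hGd : HasDerivAt G (-(comb t)) t := by
      convert (hA.mul hB).mul hC using 1
      case e'_4 => rfl
      case e'_8 => rfl
      have et : ∀ x : ℂ, (t:ℂ) ^ (x + 1) = (t:ℂ) ^ x * (t:ℂ) := fun x => by
        rw [Complex.cpow_add _ _ htc0, Complex.cpow_one]
      have eu : ∀ x : ℂ, ((1:ℂ) - (t:ℂ)) ^ (x + 1) = ((1:ℂ) - (t:ℂ)) ^ x * ((1:ℂ) - (t:ℂ)) :=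
        fun x => by rw [Complex.cpow_add _ _ h1t0, Complex.cpow_one]
      have ew : ∀ x : ℂ, (1 - z * (t:ℂ)) ^ (x + 1) = (1 - z * (t:ℂ)) ^ x * (1 - z * (t:ℂ)) :=
        fun x => by rw [Complex.cpow_add _ _ hw0, Complex.cpow_one]
      have eA : (t:ℂ) ^ a = (t:ℂ) ^ (a - 1) * (t:ℂ) := by
        have h := et (a - 1); rwa [show a - 1 + 1 = a by ring] at h
      have eB : ((1:ℂ) - (t:ℂ)) ^ (c - a) = ((1:ℂ) - (t:ℂ)) ^ (c - a - 1) * ((1:ℂ) - (t:ℂ)) := by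
        have h := eu (c - a - 1); rwa [show c - a - 1 + 1 = c - a by ring] at h
      have eW1 : (1 - z * (t:ℂ)) ^ (-b - 1) = (1 - z * (t:ℂ)) ^ (-b - 2) * (1 - z * (t:ℂ)) := by
        have h := ew (-b - 2); rwa [show -b - 2 + 1 = -b - 1 by ring] at h
      have eW0 : (1 - z * (t:ℂ)) ^ (-b : ℂ) = (1 - z * (t:ℂ)) ^ (-b - 1) * (1 - z * (t:ℂ)) := by
        have h := ew (-b - 1); rwa [show -b - 1 + 1 = -b by ring] at h
      simp only [hcomb, F, Pi.mul_apply, show a - 1 + (0:ℂ) = a - 1 by ring,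
        show -b - (0:ℂ) = -b by ring, show -b - 1 - 1 = -b - 2 by ring,
        show a - 1 + (2:ℂ) = a - 1 + 1 + 1 by ring]
      rw [eW0, eW1, et (a - 1 + 1), et (a - 1), eA, eB]
      ring
    exact hGd.hasDerivWithinAt
  have hint : IntervalIntegrable (fun t => -(comb t)) volume 0 1 := by
    apply IntervalIntegrable.neg
    exact (((F_intble b ha hca 2 (by norm_num) hz).const_mul _).add
      ((F_intble b ha hca 1 (by norm_num) hz).const_mul _)).sub
      ((F_intble b ha hca 0 (by norm_num) hz).const_mul _)
  have hF := intervalIntegral.integral_eq_sub_of_hasDeriv_right_of_le zero_le_one hcont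
    hderiv hint
  have hG1 : G 1 = 0 := by
    simp [hG, Complex.zero_cpow hca0]
  have hG0 : G 0 = 0 := by
    simp [hG, Complex.zero_cpow ha0]
  rw [hG1, hG0, sub_zero, intervalIntegral.integral_neg, neg_eq_zero] at hF
  exact hF

end Stmt15Aux


open Stmt15Aux Set MeasureTheory Metric in
set_option maxHeartbeats 1000000 in
/-- Euler's integral `f(z) = ∫₀¹ t^{a-1}(1-t)^{c-a-1}(1-zt)^{-b} dt` is twice
complex-differentiable on `ℂ ∖ [1,∞)` and satisfies Gauss' hypergeometric
differential equation there. -/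
theorem stmt15 (a b c : ℂ) (ha : 0 < a.re) (hca : 0 < (c - a).re)
    (f : ℂ → ℂ)
    (hf : ∀ w : ℂ, f w = ∫ t in (0 : ℝ)..1,
      (t : ℂ) ^ (a - 1) * ((1 : ℂ) - (t : ℂ)) ^ (c - a - 1) * (1 - w * (t : ℂ)) ^ (-b)) :
    DifferentiableOn ℂ f {z : ℂ | ∀ r : ℝ, 1 ≤ r → z ≠ (r : ℂ)} ∧
    DifferentiableOn ℂ (deriv f) {z : ℂ | ∀ r : ℝ, 1 ≤ r → z ≠ (r : ℂ)} ∧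
    ∀ z ∈ {z : ℂ | ∀ r : ℝ, 1 ≤ r → z ≠ (r : ℂ)},
      z * (1 - z) * deriv (deriv f) z + (c - (a + b + 1) * z) * deriv f z
        - a * b * f z = 0 := by
  have hUs : {z : ℂ | ∀ r : ℝ, 1 ≤ r → z ≠ (r : ℂ)} = U := rfl
  rw [hUs]
  have hfI : ∀ w, f w = ∫ t in (0:ℝ)..1, F a b c 0 w t := fun w => by
    rw [hf w]; simp only [F, add_zero, sub_zero]
  have hfeq : f = fun w => ∫ t in (0:ℝ)..1, F a b c 0 w t := funext hfI
  have hD0 : ∀ z ∈ U, HasDerivAt (fun w => ∫ t in (0:ℝ)..1, F a b c 0 w t)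
      (b * ∫ t in (0:ℝ)..1, F a b c 1 z t) z := by
    intro z hz
    have h := deriv_step b ha hca 0 le_rfl hz
    rwa [add_zero, zero_add] at h
  have hD1 : ∀ z ∈ U, HasDerivAt (fun w => ∫ t in (0:ℝ)..1, F a b c 1 w t)
      ((b + 1) * ∫ t in (0:ℝ)..1, F a b c 2 z t) z := by
    intro z hz
    have h := deriv_step b ha hca 1 (by norm_num) hz
    rwa [show (1:ℂ) + 1 = 2 by norm_num] at h
  have hf' : ∀ z ∈ U, deriv f z = b * ∫ t in (0:ℝ)..1, F a b c 1 z t := by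
    intro z hz
    rw [hfeq]
    exact (hD0 z hz).deriv
  have hdf_eq : ∀ z ∈ U, deriv f =ᶠ[nhds z]
      fun w => b * ∫ t in (0:ℝ)..1, F a b c 1 w t := fun z hz =>
    Filter.eventually_of_mem (isOpen_U.mem_nhds hz) fun w hw => hf' w hw
  refine ⟨?_, ?_, ?_⟩
  · rw [hfeq]
    exact fun z hz => (hD0 z hz).differentiableAt.differentiableWithinAt
  · intro z hz
    exact (((hD1 z hz).const_mul b).differentiableAt.congr_of_eventuallyEq
      (hdf_eq z hz)).differentiableWithinAt
  · intro z hz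
    have hd2 : deriv (deriv f) z = b * ((b + 1) * ∫ t in (0:ℝ)..1, F a b c 2 z t) := by
      rw [Filter.EventuallyEq.deriv_eq (hdf_eq z hz)]
      exact ((hD1 z hz).const_mul b).deriv
    rw [hd2, hf' z hz, hfI z]
    have h2 := ftc b ha hca hz
    rw [intervalIntegral.integral_sub
        (((F_intble b ha hca 2 (by norm_num) hz).const_mul _).add
          ((F_intble b ha hca 1 (by norm_num) hz).const_mul _))
        ((F_intble b ha hca 0 le_rfl hz).const_mul _),
      intervalIntegral.integral_add
        ((F_intble b ha hca 2 (by norm_num) hz).const_mul _)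
        ((F_intble b ha hca 1 (by norm_num) hz).const_mul _),
      intervalIntegral.integral_const_mul, intervalIntegral.integral_const_mul,
      intervalIntegral.integral_const_mul] at h2
    linear_combination b * h2
end

section
/- Let a, b, c ∈ ℂ with 0 < Re(a) and 0 < Re(c-a), let z ∈ ℂ ∖ [1,∞), and let α : ℝ → ℂ be continuously differentiable on [0,1]. Define Φ(t) = t^a(1-t)^{c-a}(1-zt)^{-b} for t ∈ (0,1) using principal complex powers. Then ∫_{t=0}^{1} Φ(t)·( α'(t) + (a/t - (c-a)/(1-t) + b·z/(1-zt))·α(t) ) dt = 0. -/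
open Complex MeasureTheory Set Filter Topology

/-- The integral over the twisted cycle `Δ₀₁ = (0,1)` of the exact form
`d(Φα) = Φ(α' + d log Φ · α)`, with `Φ(t) = t^a(1-t)^{c-a}(1-zt)^{-b}` and
`d log Φ/dt = a/t - (c-a)/(1-t) + bz/(1-zt)`, vanishes when `Re a > 0`,
`Re (c-a) > 0` and `z ∉ [1,∞)`. -/
theorem stmt16 (a b c : ℂ) (ha : 0 < a.re) (hca : 0 < (c - a).re)
    (z : ℂ) (hz : ∀ r : ℝ, 1 ≤ r → z ≠ (r : ℂ))
    (α : ℝ → ℂ) (hα : ContDiffOn ℝ 1 α (Set.Icc 0 1)) :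
    (∫ t in (0 : ℝ)..1,
      ((t : ℂ) ^ a * ((1 : ℂ) - (t : ℂ)) ^ (c - a) * (1 - z * (t : ℂ)) ^ (-b))
        * (derivWithin α (Set.Icc 0 1) t
          + (a / (t : ℂ) - (c - a) / (1 - (t : ℂ)) + b * z / (1 - z * (t : ℂ))) * α t))
      = 0 := by
  have hane : a ≠ 0 := fun h => by simp [h] at ha
  have hcane : c - a ≠ 0 := fun h => by simp [h] at hca
  -- the base `1 - z t` lies in the slit plane for `t ∈ [0,1]`
  have hslit : ∀ t : ℝ, t ∈ Icc (0:ℝ) 1 → 1 - z * (t:ℂ) ∈ Complex.slitPlane := by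
    intro t ht
    rw [Complex.mem_slitPlane_iff]
    by_contra hcon
    push_neg at hcon
    obtain ⟨h1, h2⟩ := hcon
    have hre : (1 - z * (t:ℂ)).re = 1 - z.re * t := by simp
    have him : (1 - z * (t:ℂ)).im = -(z.im * t) := by simp
    rw [hre] at h1
    rw [him] at h2
    have ht0 : 0 < t := by
      rcases eq_or_lt_of_le ht.1 with h | h
      · exfalso; rw [← h] at h1; norm_num at h1
      · exact h
    have hzim : z.im = 0 := by
      have : z.im * t = 0 := by linarith
      rcases mul_eq_zero.mp this with h | h
      · exact h
      · exact absurd h (ne_of_gt ht0)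
    have hzre : 1 ≤ z.re := by nlinarith [ht.2]
    exact hz z.re hzre (Complex.ext (by simp) (by simp [hzim]))
  have hVne : ∀ t : ℝ, t ∈ Icc (0:ℝ) 1 → 1 - z * (t:ℂ) ≠ 0 :=
    fun t ht => Complex.slitPlane_ne_zero (hslit t ht)
  have hinner : Continuous (fun t : ℝ => 1 - z * (t:ℂ)) :=
    continuous_const.sub (continuous_const.mul Complex.continuous_ofReal)
  have hcV : ContinuousOn (fun t : ℝ => (1 - z * (t:ℂ)) ^ (-b)) (Icc 0 1) := fun t ht =>
    (hinner.continuousAt.cpow continuousAt_const (hslit t ht)).continuousWithinAt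
  have hαc : ContinuousOn α (Icc 0 1) := hα.continuousOn
  have hD : ContinuousOn (derivWithin α (Icc 0 1)) (Icc 0 1) :=
    hα.continuousOn_derivWithin (uniqueDiffOn_Icc zero_lt_one) le_rfl
  -- the bounded factor
  set H : ℝ → ℂ := fun t =>
    (t:ℂ) * (1 - (t:ℂ)) * (1 - z * (t:ℂ)) ^ (-b) * derivWithin α (Icc 0 1) t
      + (1 - z * (t:ℂ)) ^ (-b)
        * ((1 - (t:ℂ)) * a - (t:ℂ) * (c - a)
            + (t:ℂ) * (1 - (t:ℂ)) * (b * z / (1 - z * (t:ℂ)))) * α t with hHdef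
  have hcRe : ContinuousOn (fun t : ℝ => (t:ℂ)) (Icc 0 1) :=
    Complex.continuous_ofReal.continuousOn
  have hc1m : ContinuousOn (fun t : ℝ => (1:ℂ) - (t:ℂ)) (Icc 0 1) :=
    (continuous_const.sub Complex.continuous_ofReal).continuousOn
  have hHc : ContinuousOn H (Icc 0 1) := by
    apply ContinuousOn.add
    · exact ((hcRe.mul hc1m).mul hcV).mul hD
    · refine (hcV.mul (ContinuousOn.add (ContinuousOn.sub ?_ ?_) ?_)).mul hαc
      · exact hc1m.mul continuousOn_const
      · exact hcRe.mul continuousOn_const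
      · exact (hcRe.mul hc1m).mul (continuousOn_const.div hinner.continuousOn hVne)
  obtain ⟨C, hC⟩ := isCompact_Icc.exists_bound_of_continuousOn hHc
  -- the integrable singular factor
  set Ψ : ℝ → ℂ := fun t => (t:ℂ) ^ (a - 1) * (1 - (t:ℂ)) ^ (c - a - 1) with hΨdef
  have hΨint : IntervalIntegrable Ψ volume 0 1 := Complex.betaIntegral_convergent ha hca
  -- the integrand
  set G : ℝ → ℂ := fun t =>
    ((t : ℂ) ^ a * ((1 : ℂ) - (t : ℂ)) ^ (c - a) * (1 - z * (t : ℂ)) ^ (-b))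
      * (derivWithin α (Set.Icc 0 1) t
        + (a / (t : ℂ) - (c - a) / (1 - (t : ℂ)) + b * z / (1 - z * (t : ℂ))) * α t)
    with hGdef
  -- factorization of the integrand on (0,1)
  have hfac : ∀ t : ℝ, t ∈ Ioo (0:ℝ) 1 → G t = Ψ t * H t := by
    intro t ht
    have hts : (t:ℂ) ≠ 0 := Complex.ofReal_ne_zero.mpr (ne_of_gt ht.1)
    have h1ts : (1:ℂ) - (t:ℂ) ≠ 0 := sub_ne_zero.mpr (by exact_mod_cast ht.2.ne')
    have hzt : 1 - z * (t:ℂ) ≠ 0 := hVne t (Ioo_subset_Icc_self ht)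
    have hta : (t:ℂ) ^ a = (t:ℂ) ^ (a - 1) * (t:ℂ) := by
      conv_lhs => rw [show a = a - 1 + 1 by ring]
      rw [Complex.cpow_add _ _ hts, Complex.cpow_one]
    have htca : ((1:ℂ) - (t:ℂ)) ^ (c - a) = ((1:ℂ) - (t:ℂ)) ^ (c - a - 1) * ((1:ℂ) - (t:ℂ)) := by
      conv_lhs => rw [show c - a = c - a - 1 + 1 by ring]
      rw [Complex.cpow_add _ _ h1ts, Complex.cpow_one]
    simp only [hGdef, hΨdef, hHdef, hta, htca]
    field_simp
  -- continuity of the integrand on (0,1)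
  have hGcont : ContinuousOn G (Ioo 0 1) := by
    have hIoo : Ioo (0:ℝ) 1 ⊆ Icc 0 1 := Ioo_subset_Icc_self
    intro t ht
    have hts : (t:ℂ) ≠ 0 := Complex.ofReal_ne_zero.mpr (ne_of_gt ht.1)
    have h1ts : (1:ℂ) - (t:ℂ) ≠ 0 := sub_ne_zero.mpr (by exact_mod_cast ht.2.ne')
    have hslitt : (t:ℂ) ∈ Complex.slitPlane := by
      rw [Complex.mem_slitPlane_iff]; left; simpa using ht.1
    have hslit1t : (1:ℂ) - (t:ℂ) ∈ Complex.slitPlane := by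
      rw [Complex.mem_slitPlane_iff]; left; simp; linarith [ht.2]
    have c1 : ContinuousWithinAt (fun s : ℝ => (s:ℂ) ^ a) (Ioo 0 1) t :=
      (Complex.continuous_ofReal.continuousAt.cpow continuousAt_const hslitt).continuousWithinAt
    have c2 : ContinuousWithinAt (fun s : ℝ => ((1:ℂ) - (s:ℂ)) ^ (c - a)) (Ioo 0 1) t :=
      ((continuous_const.sub Complex.continuous_ofReal).continuousAt.cpow
        continuousAt_const hslit1t).continuousWithinAt
    have c3 : ContinuousWithinAt (fun s : ℝ => (1 - z * (s:ℂ)) ^ (-b)) (Ioo 0 1) t :=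
      (hcV t (hIoo ht)).mono hIoo
    have cD : ContinuousWithinAt (derivWithin α (Icc 0 1)) (Ioo 0 1) t :=
      (hD t (hIoo ht)).mono hIoo
    have cα : ContinuousWithinAt α (Ioo 0 1) t := (hαc t (hIoo ht)).mono hIoo
    have cAdiv : ContinuousWithinAt (fun s : ℝ => a / (s:ℂ)) (Ioo 0 1) t :=
      (continuousWithinAt_const.div
        Complex.continuous_ofReal.continuousAt.continuousWithinAt hts)
    have cBdiv : ContinuousWithinAt (fun s : ℝ => (c - a) / ((1:ℂ) - (s:ℂ))) (Ioo 0 1) t :=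
      (continuousWithinAt_const.div
        (continuous_const.sub Complex.continuous_ofReal).continuousAt.continuousWithinAt h1ts)
    have cCdiv : ContinuousWithinAt (fun s : ℝ => b * z / (1 - z * (s:ℂ))) (Ioo 0 1) t :=
      (continuousWithinAt_const.div hinner.continuousAt.continuousWithinAt
        (hVne t (hIoo ht)))
    exact ((c1.mul c2).mul c3).mul (cD.add (((cAdiv.sub cBdiv).add cCdiv).mul cα))
  -- integrability of the integrand
  have hGint : IntervalIntegrable G volume 0 1 := by
    rw [intervalIntegrable_iff_integrableOn_Ioo_of_le zero_le_one]
    have hΨi : IntegrableOn Ψ (Ioo 0 1) volume :=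
      (intervalIntegrable_iff_integrableOn_Ioo_of_le zero_le_one).mp hΨint
    refine Integrable.mono' (hΨi.norm.const_mul C)
      (hGcont.aestronglyMeasurable measurableSet_Ioo) ?_
    filter_upwards [ae_restrict_mem measurableSet_Ioo] with t ht
    rw [hfac t ht, norm_mul]
    calc ‖Ψ t‖ * ‖H t‖ ≤ ‖Ψ t‖ * C :=
          mul_le_mul_of_nonneg_left (hC t (Ioo_subset_Icc_self ht)) (norm_nonneg _)
      _ = C * ‖Ψ t‖ := mul_comm _ _
  -- the primitive
  set F : ℝ → ℂ := fun t =>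
    ((t : ℂ) ^ a * ((1 : ℂ) - (t : ℂ)) ^ (c - a) * (1 - z * (t : ℂ)) ^ (-b)) * α t with hFdef
  have hderiv : ∀ t ∈ Ioo (0:ℝ) 1, HasDerivAt F (G t) t := by
    intro t ht
    have hmem : Icc (0:ℝ) 1 ∈ 𝓝 t := Icc_mem_nhds ht.1 ht.2
    have hαt : DifferentiableAt ℝ α t :=
      ((hα.differentiableOn one_ne_zero) t (Ioo_subset_Icc_self ht)).differentiableAt hmem
    have hdw : derivWithin α (Icc 0 1) t = deriv α t := derivWithin_of_mem_nhds hmem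
    have hts : (t:ℂ) ≠ 0 := Complex.ofReal_ne_zero.mpr (ne_of_gt ht.1)
    have h1ts : (1:ℂ) - (t:ℂ) ≠ 0 := sub_ne_zero.mpr (by exact_mod_cast ht.2.ne')
    have hzt : 1 - z * (t:ℂ) ≠ 0 := hVne t (Ioo_subset_Icc_self ht)
    have hslitt : (t:ℂ) ∈ Complex.slitPlane := by
      rw [Complex.mem_slitPlane_iff]; left; simpa using ht.1
    have hslit1t : (1:ℂ) - (t:ℂ) ∈ Complex.slitPlane := by
      rw [Complex.mem_slitPlane_iff]; left; simp; linarith [ht.2]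
    have h1 : HasDerivAt (fun s : ℝ => (s:ℂ) ^ a) (a * (t:ℂ) ^ (a - 1) * 1) t :=
      ((hasDerivAt_id ((t:ℝ):ℂ)).cpow_const hslitt).comp_ofReal
    have h2c : HasDerivAt (fun x : ℂ => (1:ℂ) - x) (-1) ((t:ℝ):ℂ) := by
      simpa using (hasDerivAt_id ((t:ℝ):ℂ)).const_sub (1:ℂ)
    have h2 : HasDerivAt (fun s : ℝ => ((1:ℂ) - (s:ℂ)) ^ (c - a))
        ((c - a) * ((1:ℂ) - (t:ℂ)) ^ (c - a - 1) * (-1)) t :=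
      (h2c.cpow_const hslit1t).comp_ofReal
    have h3c : HasDerivAt (fun x : ℂ => 1 - z * x) (-z) ((t:ℝ):ℂ) := by
      simpa using ((hasDerivAt_id ((t:ℝ):ℂ)).const_mul z).const_sub (1:ℂ)
    have h3 : HasDerivAt (fun s : ℝ => (1 - z * (s:ℂ)) ^ (-b))
        ((-b) * (1 - z * (t:ℂ)) ^ (-b - 1) * (-z)) t :=
      (h3c.cpow_const (hslit t ⟨ht.1.le, ht.2.le⟩)).comp_ofReal
    have hFd := ((h1.mul h2).mul h3).mul hαt.hasDerivAt
    convert hFd using 1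
    · rfl
    · rfl
    have e1 : (t:ℂ) ^ (a - 1) = (t:ℂ) ^ a * (t:ℂ)⁻¹ := by
      rw [show a - 1 = a + (-1) by ring, Complex.cpow_add _ _ hts, Complex.cpow_neg_one]
    have e2 : ((1:ℂ) - (t:ℂ)) ^ (c - a - 1) = ((1:ℂ) - (t:ℂ)) ^ (c - a) * ((1:ℂ) - (t:ℂ))⁻¹ := by
      rw [show c - a - 1 = c - a + (-1) by ring, Complex.cpow_add _ _ h1ts, Complex.cpow_neg_one]
    have e3 : (1 - z * (t:ℂ)) ^ (-b - 1) = (1 - z * (t:ℂ)) ^ (-b) * (1 - z * (t:ℂ))⁻¹ := by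
      rw [show -b - 1 = -b + (-1) by ring, Complex.cpow_add _ _ hzt, Complex.cpow_neg_one]
    simp only [hGdef, hdw, e1, e2, e3, Pi.mul_apply]
    field_simp
    ring
  -- endpoint limits
  have hF' : ∀ t : ℝ,
      F t = (t:ℂ) ^ a * (((1:ℂ) - (t:ℂ)) ^ (c - a) * ((1 - z * (t:ℂ)) ^ (-b) * α t)) := by
    intro t; rw [hFdef]; ring
  have hF'' : ∀ t : ℝ,
      F t = ((1:ℂ) - (t:ℂ)) ^ (c - a) * ((t:ℂ) ^ a * ((1 - z * (t:ℂ)) ^ (-b) * α t)) := by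
    intro t; rw [hFdef]; ring
  have h0lim : Tendsto F (𝓝[>] (0:ℝ)) (𝓝 0) := by
    have hc0 : ContinuousAt (fun x : ℂ => x ^ a) 0 :=
      continuousAt_cpow_const_of_re_pos (Or.inl (by simp)) ha
    have hto0 : Tendsto (fun t : ℝ => (t:ℂ)) (𝓝[>] (0:ℝ)) (𝓝 0) := by
      have := (Complex.continuous_ofReal.tendsto 0).mono_left
        (nhdsWithin_le_nhds (s := Ioi (0:ℝ)))
      simpa using this
    have T1 : Tendsto (fun t : ℝ => (t:ℂ) ^ a) (𝓝[>] (0:ℝ)) (𝓝 0) := by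
      have := hc0.tendsto.comp hto0
      rwa [Complex.zero_cpow hane] at this
    have TA : Tendsto (fun t : ℝ => ((1:ℂ) - (t:ℂ)) ^ (c - a)) (𝓝[>] (0:ℝ))
        (𝓝 (((1:ℂ) - ((0:ℝ):ℂ)) ^ (c - a))) := by
      refine Tendsto.mono_left ?_ nhdsWithin_le_nhds
      exact ((continuous_const.sub Complex.continuous_ofReal).continuousAt.cpow
        continuousAt_const (by simp [Complex.mem_slitPlane_iff]))
    have TB : Tendsto (fun t : ℝ => (1 - z * (t:ℂ)) ^ (-b)) (𝓝[>] (0:ℝ))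
        (𝓝 ((1 - z * ((0:ℝ):ℂ)) ^ (-b))) := by
      refine Tendsto.mono_left ?_ nhdsWithin_le_nhds
      exact hinner.continuousAt.cpow continuousAt_const (hslit 0 ⟨le_rfl, zero_le_one⟩)
    have Tα : Tendsto α (𝓝[>] (0:ℝ)) (𝓝 (α 0)) := by
      have := (hαc 0 ⟨le_rfl, zero_le_one⟩).mono_left
        (nhdsWithin_mono _ Ioc_subset_Icc_self)
      rwa [nhdsWithin_Ioc_eq_nhdsGT zero_lt_one] at this
    have := T1.mul (TA.mul (TB.mul Tα))
    rw [zero_mul] at this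
    exact Tendsto.congr (fun t => (hF' t).symm) this
  have h1lim : Tendsto F (𝓝[<] (1:ℝ)) (𝓝 0) := by
    have hc0 : ContinuousAt (fun x : ℂ => x ^ (c - a)) 0 :=
      continuousAt_cpow_const_of_re_pos (Or.inl (by simp)) hca
    have hto0 : Tendsto (fun t : ℝ => (1:ℂ) - (t:ℂ)) (𝓝[<] (1:ℝ)) (𝓝 0) := by
      have h : Tendsto (fun t : ℝ => (1:ℂ) - (t:ℂ)) (𝓝 (1:ℝ)) (𝓝 ((1:ℂ) - ((1:ℝ):ℂ))) :=
        (continuous_const.sub Complex.continuous_ofReal).tendsto 1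
      simpa using h.mono_left (nhdsWithin_le_nhds (s := Iio (1:ℝ)))
    have T1 : Tendsto (fun t : ℝ => ((1:ℂ) - (t:ℂ)) ^ (c - a)) (𝓝[<] (1:ℝ)) (𝓝 0) := by
      have := hc0.tendsto.comp hto0
      rwa [Complex.zero_cpow hcane] at this
    have TA : Tendsto (fun t : ℝ => (t:ℂ) ^ a) (𝓝[<] (1:ℝ))
        (𝓝 ((((1:ℝ):ℂ)) ^ a)) := by
      refine Tendsto.mono_left ?_ nhdsWithin_le_nhds
      exact Complex.continuous_ofReal.continuousAt.cpow continuousAt_const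
        (by rw [Complex.mem_slitPlane_iff]; left; norm_num)
    have TB : Tendsto (fun t : ℝ => (1 - z * (t:ℂ)) ^ (-b)) (𝓝[<] (1:ℝ))
        (𝓝 ((1 - z * ((1:ℝ):ℂ)) ^ (-b))) := by
      refine Tendsto.mono_left ?_ nhdsWithin_le_nhds
      exact hinner.continuousAt.cpow continuousAt_const (hslit 1 ⟨zero_le_one, le_rfl⟩)
    have Tα : Tendsto α (𝓝[<] (1:ℝ)) (𝓝 (α 1)) := by
      have := (hαc 1 ⟨zero_le_one, le_rfl⟩).mono_left
        (nhdsWithin_mono _ Ico_subset_Icc_self)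
      rwa [nhdsWithin_Ico_eq_nhdsLT zero_lt_one] at this
    have := T1.mul (TA.mul (TB.mul Tα))
    rw [zero_mul] at this
    exact Tendsto.congr (fun t => (hF'' t).symm) this
  have key := intervalIntegral.integral_eq_sub_of_hasDerivAt_of_tendsto
    zero_lt_one hderiv hGint h0lim h1lim
  simpa using key
end
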